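/- arXiv:1304.1226 — 6 statements merged into one kernel-verified Lean document; each statement's English description precedes it below -/
import Mathlib

section
/- Euler's putative identity fails for all sufficiently large n: there exists N such that for all n ≥ N, 3·C(n+1, 0)₂ − C(n+2, 0)₂ ≠ Fₙ·(Fₙ + 1). In particular, the set of natural numbers n for which 3·C(n+1, 0)₂ − C(n+2, 0)₂ = Fₙ·(Fₙ + 1) is finite. -/
open LaurentPolynomial

/-- The trinomial coefficient `C(n, j)₂`: the coefficient of `x^j` in
`(x⁻¹ + 1 + x)^n`, viewed in the ring of Laurent polynomials `ℤ[T;T⁻¹]`. -/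
noncomputable def trinom (n : ℕ) (j : ℤ) : ℤ :=
  (((T (-1) + 1 + T 1 : ℤ[T;T⁻¹])) ^ n).coeff j

/-- concrete recursion for trinomial coefficients -/
def tri : ℕ → ℤ → ℤ
  | 0, j => if j = 0 then 1 else 0
  | n+1, j => tri n (j-1) + tri n j + tri n (j+1)

lemma T_mul_apply (a : ℤ) (f : ℤ[T;T⁻¹]) (j : ℤ) : ((T a * f : ℤ[T;T⁻¹])).coeff j = f.coeff (j - a) := by
  simp only [LaurentPolynomial.T]
  rw [AddMonoidAlgebra.coeff_single_mul_apply, one_mul]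
  ring_nf

lemma trinom_eq_tri (n : ℕ) (j : ℤ) : trinom n j = tri n j := by
  induction n generalizing j with
  | zero =>
    simp only [trinom, pow_zero, tri]
    rw [AddMonoidAlgebra.one_def, AddMonoidAlgebra.coeff_single, Finsupp.single_apply]
    simp [eq_comm]
  | succ n ih =>
    have hp : (T (-1) + 1 + T 1 : ℤ[T;T⁻¹]) ^ (n+1)
        = (T (-1) + 1 + T 1) * (T (-1) + 1 + T 1) ^ n := by ring
    have h1 : (1 : ℤ[T;T⁻¹]) = T 0 := T_zero.symm
    simp only [trinom] at ih ⊢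
    rw [hp, h1, add_mul, add_mul, AddMonoidAlgebra.coeff_add, AddMonoidAlgebra.coeff_add, Finsupp.add_apply, Finsupp.add_apply,
      T_mul_apply, T_mul_apply, T_mul_apply, ← h1]
    simp only [ih]
    show _ = tri (n+1) j
    simp only [tri, sub_neg_eq_add, sub_zero]
    ring

lemma tri_neg (n : ℕ) : ∀ j : ℤ, tri n (-j) = tri n j := by
  induction n with
  | zero => intro j; simp only [tri, neg_eq_zero]
  | succ n ih =>
    intro j
    show tri n (-j-1) + tri n (-j) + tri n (-j+1) = tri n (j-1) + tri n j + tri n (j+1)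
    have h1 : -j - 1 = -(j+1) := by ring
    have h2 : -j + 1 = -(j-1) := by ring
    rw [h1, h2, ih, ih, ih]
    ring

lemma tri_vanish (n : ℕ) : ∀ j : ℤ, (n : ℤ) < j → tri n j = 0 := by
  induction n with
  | zero =>
    intro j hj
    have : j ≠ 0 := by simp at hj; omega
    simp only [tri, if_neg this]
  | succ n ih =>
    intro j hj
    push_cast at hj
    show tri n (j-1) + tri n j + tri n (j+1) = 0
    rw [ih (j-1) (by omega), ih j (by omega), ih (j+1) (by omega)]
    ring

/-- difference of consecutive trinomial coefficients -/
def d (n j : ℕ) : ℤ := tri n (j : ℤ) - tri n ((j : ℤ) + 1)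

lemma d_rec (n j : ℕ) : d (n+1) (j+1) = d n j + d n (j+1) + d n (j+2) := by
  unfold d
  show tri n ((j:ℤ)+1-1) + tri n ((j:ℤ)+1) + tri n ((j:ℤ)+1+1)
      - (tri n ((j:ℤ)+1+1-1) + tri n ((j:ℤ)+1+1) + tri n ((j:ℤ)+1+1+1)) = _
  push_cast
  ring_nf

lemma d_zero (n : ℕ) : d (n+1) 0 = d n 1 := by
  unfold d
  show tri n ((0:ℤ)-1) + tri n 0 + tri n (0+1)
      - (tri n ((0:ℤ)+1-1) + tri n ((0:ℤ)+1) + tri n ((0:ℤ)+1+1)) = _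
  have : ((0:ℤ)-1) = -(1:ℤ) := by ring
  rw [this, tri_neg n 1]
  push_cast
  ring_nf

lemma d_vanish {n j : ℕ} (h : n < j) : d n j = 0 := by
  unfold d
  rw [tri_vanish n j (by exact_mod_cast h), tri_vanish n ((j:ℤ)+1) (by push_cast; omega)]
  ring

lemma d_nonneg (n : ℕ) : ∀ j : ℕ, 0 ≤ d n j := by
  induction n with
  | zero =>
    intro j
    match j with
    | 0 => unfold d; norm_num [tri]
    | j+1 => rw [d_vanish (by omega)]
  | succ n ih =>
    intro j
    match j with
    | 0 => rw [d_zero]; exact ih 1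
    | j+1 =>
      rw [d_rec]
      have := ih j; have := ih (j+1); have := ih (j+2)
      omega

lemma fib_step (k : ℕ) : 3 * Nat.fib (k+5) ≤ 8 * Nat.fib (k+3) := by
  have h1 : Nat.fib (k+3+2) = Nat.fib (k+3) + Nat.fib (k+3+1) := Nat.fib_add_two
  have h2 : Nat.fib (k+2+2) = Nat.fib (k+2) + Nat.fib (k+2+1) := Nat.fib_add_two
  have h3 : Nat.fib (k+1+2) = Nat.fib (k+1) + Nat.fib (k+1+1) := Nat.fib_add_two
  have h4 : Nat.fib (k+2) = Nat.fib k + Nat.fib (k+1) := Nat.fib_add_two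
  simp only [show k+3+2 = k+5 by ring, show k+3+1 = k+4 by ring, show k+2+2 = k+4 by ring,
    show k+2+1 = k+3 by ring, show k+1+2 = k+3 by ring, show k+1+1 = k+2 by ring] at h1 h2 h3
  have h5 : Nat.fib k ≤ Nat.fib (k+1) := Nat.fib_le_fib_succ
  omega

lemma fib_rhs_le (n : ℕ) : Nat.fib n * (Nat.fib n + 1) ≤ Nat.fib (2*n+1) := by
  rw [Nat.fib_two_mul_add_one]
  have h1 : Nat.fib n ≤ Nat.fib (n+1) := Nat.fib_le_fib_succ
  have h2 : 1 ≤ Nat.fib (n+1) := Nat.fib_pos.mpr (by omega)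
  nlinarith


lemma dv_0_0 : d 0 0 = 1 := by unfold d; norm_num [tri]

lemma dv_1_0 : d 1 0 = 0 := by
  have h := d_zero 0
  norm_num [d_vanish (show 0 < 1 by norm_num)] at h
  exact h

lemma dv_1_1 : d 1 1 = 1 := by
  have h := d_rec 0 0
  norm_num [dv_0_0, d_vanish (show 0 < 1 by norm_num), d_vanish (show 0 < 2 by norm_num)] at h
  exact h

lemma dv_2_0 : d 2 0 = 1 := by
  have h := d_zero 1
  norm_num [dv_1_1] at h
  exact h

lemma dv_2_1 : d 2 1 = 1 := by
  have h := d_rec 1 0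
  norm_num [dv_1_0, dv_1_1, d_vanish (show 1 < 2 by norm_num)] at h
  exact h

lemma dv_2_2 : d 2 2 = 1 := by
  have h := d_rec 1 1
  norm_num [dv_1_1, d_vanish (show 1 < 2 by norm_num), d_vanish (show 1 < 3 by norm_num)] at h
  exact h

lemma dv_3_0 : d 3 0 = 1 := by
  have h := d_zero 2
  norm_num [dv_2_1] at h
  exact h

lemma dv_3_1 : d 3 1 = 3 := by
  have h := d_rec 2 0
  norm_num [dv_2_0, dv_2_1, dv_2_2] at h
  exact h

lemma dv_3_2 : d 3 2 = 2 := by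
  have h := d_rec 2 1
  norm_num [dv_2_1, dv_2_2, d_vanish (show 2 < 3 by norm_num)] at h
  exact h

lemma dv_3_3 : d 3 3 = 1 := by
  have h := d_rec 2 2
  norm_num [dv_2_2, d_vanish (show 2 < 3 by norm_num), d_vanish (show 2 < 4 by norm_num)] at h
  exact h

lemma dv_4_0 : d 4 0 = 3 := by
  have h := d_zero 3
  norm_num [dv_3_1] at h
  exact h

lemma dv_4_1 : d 4 1 = 6 := by
  have h := d_rec 3 0
  norm_num [dv_3_0, dv_3_1, dv_3_2] at h
  exact h

lemma dv_4_2 : d 4 2 = 6 := by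
  have h := d_rec 3 1
  norm_num [dv_3_1, dv_3_2, dv_3_3] at h
  exact h

lemma dv_4_3 : d 4 3 = 3 := by
  have h := d_rec 3 2
  norm_num [dv_3_2, dv_3_3, d_vanish (show 3 < 4 by norm_num)] at h
  exact h

lemma dv_4_4 : d 4 4 = 1 := by
  have h := d_rec 3 3
  norm_num [dv_3_3, d_vanish (show 3 < 4 by norm_num), d_vanish (show 3 < 5 by norm_num)] at h
  exact h

lemma dv_5_0 : d 5 0 = 6 := by
  have h := d_zero 4
  norm_num [dv_4_1] at h
  exact h

lemma dv_5_1 : d 5 1 = 15 := by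
  have h := d_rec 4 0
  norm_num [dv_4_0, dv_4_1, dv_4_2] at h
  exact h

lemma dv_5_2 : d 5 2 = 15 := by
  have h := d_rec 4 1
  norm_num [dv_4_1, dv_4_2, dv_4_3] at h
  exact h

lemma dv_5_3 : d 5 3 = 10 := by
  have h := d_rec 4 2
  norm_num [dv_4_2, dv_4_3, dv_4_4] at h
  exact h

lemma dv_5_4 : d 5 4 = 4 := by
  have h := d_rec 4 3
  norm_num [dv_4_3, dv_4_4, d_vanish (show 4 < 5 by norm_num)] at h
  exact h

lemma dv_5_5 : d 5 5 = 1 := by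
  have h := d_rec 4 4
  norm_num [dv_4_4, d_vanish (show 4 < 5 by norm_num), d_vanish (show 4 < 6 by norm_num)] at h
  exact h

lemma dv_6_0 : d 6 0 = 15 := by
  have h := d_zero 5
  norm_num [dv_5_1] at h
  exact h

lemma dv_6_1 : d 6 1 = 36 := by
  have h := d_rec 5 0
  norm_num [dv_5_0, dv_5_1, dv_5_2] at h
  exact h

lemma dv_6_2 : d 6 2 = 40 := by
  have h := d_rec 5 1
  norm_num [dv_5_1, dv_5_2, dv_5_3] at h
  exact h

lemma dv_6_3 : d 6 3 = 29 := by
  have h := d_rec 5 2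
  norm_num [dv_5_2, dv_5_3, dv_5_4] at h
  exact h

lemma dv_6_4 : d 6 4 = 15 := by
  have h := d_rec 5 3
  norm_num [dv_5_3, dv_5_4, dv_5_5] at h
  exact h

lemma dv_6_5 : d 6 5 = 5 := by
  have h := d_rec 5 4
  norm_num [dv_5_4, dv_5_5, d_vanish (show 5 < 6 by norm_num)] at h
  exact h

lemma dv_6_6 : d 6 6 = 1 := by
  have h := d_rec 5 5
  norm_num [dv_5_5, d_vanish (show 5 < 6 by norm_num), d_vanish (show 5 < 7 by norm_num)] at h
  exact h

lemma dv_7_0 : d 7 0 = 36 := by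
  have h := d_zero 6
  norm_num [dv_6_1] at h
  exact h

lemma dv_7_1 : d 7 1 = 91 := by
  have h := d_rec 6 0
  norm_num [dv_6_0, dv_6_1, dv_6_2] at h
  exact h

lemma dv_7_2 : d 7 2 = 105 := by
  have h := d_rec 6 1
  norm_num [dv_6_1, dv_6_2, dv_6_3] at h
  exact h

lemma dv_7_3 : d 7 3 = 84 := by
  have h := d_rec 6 2
  norm_num [dv_6_2, dv_6_3, dv_6_4] at h
  exact h

lemma dv_7_4 : d 7 4 = 49 := by
  have h := d_rec 6 3
  norm_num [dv_6_3, dv_6_4, dv_6_5] at h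
  exact h

lemma dv_7_5 : d 7 5 = 21 := by
  have h := d_rec 6 4
  norm_num [dv_6_4, dv_6_5, dv_6_6] at h
  exact h

lemma dv_7_6 : d 7 6 = 6 := by
  have h := d_rec 6 5
  norm_num [dv_6_5, dv_6_6, d_vanish (show 6 < 7 by norm_num)] at h
  exact h

lemma dv_7_7 : d 7 7 = 1 := by
  have h := d_rec 6 6
  norm_num [dv_6_6, d_vanish (show 6 < 7 by norm_num), d_vanish (show 6 < 8 by norm_num)] at h
  exact h

lemma dv_8_0 : d 8 0 = 91 := by
  have h := d_zero 7
  norm_num [dv_7_1] at h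
  exact h

lemma dv_8_1 : d 8 1 = 232 := by
  have h := d_rec 7 0
  norm_num [dv_7_0, dv_7_1, dv_7_2] at h
  exact h

lemma dv_8_2 : d 8 2 = 280 := by
  have h := d_rec 7 1
  norm_num [dv_7_1, dv_7_2, dv_7_3] at h
  exact h

lemma dv_8_3 : d 8 3 = 238 := by
  have h := d_rec 7 2
  norm_num [dv_7_2, dv_7_3, dv_7_4] at h
  exact h

lemma dv_8_4 : d 8 4 = 154 := by
  have h := d_rec 7 3
  norm_num [dv_7_3, dv_7_4, dv_7_5] at h
  exact h

lemma dv_8_5 : d 8 5 = 76 := by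
  have h := d_rec 7 4
  norm_num [dv_7_4, dv_7_5, dv_7_6] at h
  exact h

lemma dv_8_6 : d 8 6 = 28 := by
  have h := d_rec 7 5
  norm_num [dv_7_5, dv_7_6, dv_7_7] at h
  exact h

lemma dv_8_7 : d 8 7 = 7 := by
  have h := d_rec 7 6
  norm_num [dv_7_6, dv_7_7, d_vanish (show 7 < 8 by norm_num)] at h
  exact h

lemma dv_8_8 : d 8 8 = 1 := by
  have h := d_rec 7 7
  norm_num [dv_7_7, d_vanish (show 7 < 8 by norm_num), d_vanish (show 7 < 9 by norm_num)] at h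
  exact h

lemma dv_9_0 : d 9 0 = 232 := by
  have h := d_zero 8
  norm_num [dv_8_1] at h
  exact h

lemma dv_9_1 : d 9 1 = 603 := by
  have h := d_rec 8 0
  norm_num [dv_8_0, dv_8_1, dv_8_2] at h
  exact h

lemma dv_9_2 : d 9 2 = 750 := by
  have h := d_rec 8 1
  norm_num [dv_8_1, dv_8_2, dv_8_3] at h
  exact h

lemma dv_9_3 : d 9 3 = 672 := by
  have h := d_rec 8 2
  norm_num [dv_8_2, dv_8_3, dv_8_4] at h
  exact h

lemma dv_9_4 : d 9 4 = 468 := by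
  have h := d_rec 8 3
  norm_num [dv_8_3, dv_8_4, dv_8_5] at h
  exact h

lemma dv_9_5 : d 9 5 = 258 := by
  have h := d_rec 8 4
  norm_num [dv_8_4, dv_8_5, dv_8_6] at h
  exact h

lemma dv_9_6 : d 9 6 = 111 := by
  have h := d_rec 8 5
  norm_num [dv_8_5, dv_8_6, dv_8_7] at h
  exact h

lemma dv_9_7 : d 9 7 = 36 := by
  have h := d_rec 8 6
  norm_num [dv_8_6, dv_8_7, dv_8_8] at h
  exact h

lemma dv_9_8 : d 9 8 = 8 := by
  have h := d_rec 8 7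
  norm_num [dv_8_7, dv_8_8, d_vanish (show 8 < 9 by norm_num)] at h
  exact h

lemma dv_9_9 : d 9 9 = 1 := by
  have h := d_rec 8 8
  norm_num [dv_8_8, d_vanish (show 8 < 9 by norm_num), d_vanish (show 8 < 10 by norm_num)] at h
  exact h

lemma dv_10_0 : d 10 0 = 603 := by
  have h := d_zero 9
  norm_num [dv_9_1] at h
  exact h

lemma dv_10_1 : d 10 1 = 1585 := by
  have h := d_rec 9 0
  norm_num [dv_9_0, dv_9_1, dv_9_2] at h
  exact h

lemma dv_10_2 : d 10 2 = 2025 := by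
  have h := d_rec 9 1
  norm_num [dv_9_1, dv_9_2, dv_9_3] at h
  exact h

lemma dv_10_3 : d 10 3 = 1890 := by
  have h := d_rec 9 2
  norm_num [dv_9_2, dv_9_3, dv_9_4] at h
  exact h

lemma dv_10_4 : d 10 4 = 1398 := by
  have h := d_rec 9 3
  norm_num [dv_9_3, dv_9_4, dv_9_5] at h
  exact h

lemma dv_10_5 : d 10 5 = 837 := by
  have h := d_rec 9 4
  norm_num [dv_9_4, dv_9_5, dv_9_6] at h
  exact h

lemma dv_10_6 : d 10 6 = 405 := by
  have h := d_rec 9 5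
  norm_num [dv_9_5, dv_9_6, dv_9_7] at h
  exact h

lemma dv_10_7 : d 10 7 = 155 := by
  have h := d_rec 9 6
  norm_num [dv_9_6, dv_9_7, dv_9_8] at h
  exact h

lemma dv_10_8 : d 10 8 = 45 := by
  have h := d_rec 9 7
  norm_num [dv_9_7, dv_9_8, dv_9_9] at h
  exact h

lemma dv_10_9 : d 10 9 = 9 := by
  have h := d_rec 9 8
  norm_num [dv_9_8, dv_9_9, d_vanish (show 9 < 10 by norm_num)] at h
  exact h

lemma dv_10_10 : d 10 10 = 1 := by
  have h := d_rec 9 9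
  norm_num [dv_9_9, d_vanish (show 9 < 10 by norm_num), d_vanish (show 9 < 11 by norm_num)] at h
  exact h

lemma dv_11_0 : d 11 0 = 1585 := by
  have h := d_zero 10
  norm_num [dv_10_1] at h
  exact h

lemma dv_11_1 : d 11 1 = 4213 := by
  have h := d_rec 10 0
  norm_num [dv_10_0, dv_10_1, dv_10_2] at h
  exact h

lemma dv_11_2 : d 11 2 = 5500 := by
  have h := d_rec 10 1
  norm_num [dv_10_1, dv_10_2, dv_10_3] at h
  exact h

lemma dv_11_3 : d 11 3 = 5313 := by
  have h := d_rec 10 2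
  norm_num [dv_10_2, dv_10_3, dv_10_4] at h
  exact h

lemma dv_11_4 : d 11 4 = 4125 := by
  have h := d_rec 10 3
  norm_num [dv_10_3, dv_10_4, dv_10_5] at h
  exact h

lemma dv_11_5 : d 11 5 = 2640 := by
  have h := d_rec 10 4
  norm_num [dv_10_4, dv_10_5, dv_10_6] at h
  exact h

lemma dv_11_6 : d 11 6 = 1397 := by
  have h := d_rec 10 5
  norm_num [dv_10_5, dv_10_6, dv_10_7] at h
  exact h

lemma dv_11_7 : d 11 7 = 605 := by
  have h := d_rec 10 6
  norm_num [dv_10_6, dv_10_7, dv_10_8] at h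
  exact h

lemma dv_11_8 : d 11 8 = 209 := by
  have h := d_rec 10 7
  norm_num [dv_10_7, dv_10_8, dv_10_9] at h
  exact h

lemma dv_11_9 : d 11 9 = 55 := by
  have h := d_rec 10 8
  norm_num [dv_10_8, dv_10_9, dv_10_10] at h
  exact h

lemma dv_11_10 : d 11 10 = 10 := by
  have h := d_rec 10 9
  norm_num [dv_10_9, dv_10_10, d_vanish (show 10 < 11 by norm_num)] at h
  exact h

lemma dv_11_11 : d 11 11 = 1 := by
  have h := d_rec 10 10
  norm_num [dv_10_10, d_vanish (show 10 < 11 by norm_num), d_vanish (show 10 < 12 by norm_num)] at h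
  exact h

lemma dv_12_0 : d 12 0 = 4213 := by
  have h := d_zero 11
  norm_num [dv_11_1] at h
  exact h

lemma dv_12_1 : d 12 1 = 11298 := by
  have h := d_rec 11 0
  norm_num [dv_11_0, dv_11_1, dv_11_2] at h
  exact h

lemma dv_12_2 : d 12 2 = 15026 := by
  have h := d_rec 11 1
  norm_num [dv_11_1, dv_11_2, dv_11_3] at h
  exact h

lemma dv_12_3 : d 12 3 = 14938 := by
  have h := d_rec 11 2
  norm_num [dv_11_2, dv_11_3, dv_11_4] at h
  exact h

lemma dv_12_4 : d 12 4 = 12078 := by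
  have h := d_rec 11 3
  norm_num [dv_11_3, dv_11_4, dv_11_5] at h
  exact h

lemma dv_12_5 : d 12 5 = 8162 := by
  have h := d_rec 11 4
  norm_num [dv_11_4, dv_11_5, dv_11_6] at h
  exact h

lemma dv_12_6 : d 12 6 = 4642 := by
  have h := d_rec 11 5
  norm_num [dv_11_5, dv_11_6, dv_11_7] at h
  exact h

lemma dv_12_7 : d 12 7 = 2211 := by
  have h := d_rec 11 6
  norm_num [dv_11_6, dv_11_7, dv_11_8] at h
  exact h

lemma dv_12_8 : d 12 8 = 869 := by
  have h := d_rec 11 7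
  norm_num [dv_11_7, dv_11_8, dv_11_9] at h
  exact h

lemma dv_12_9 : d 12 9 = 274 := by
  have h := d_rec 11 8
  norm_num [dv_11_8, dv_11_9, dv_11_10] at h
  exact h

lemma dv_12_10 : d 12 10 = 66 := by
  have h := d_rec 11 9
  norm_num [dv_11_9, dv_11_10, dv_11_11] at h
  exact h

lemma dv_12_11 : d 12 11 = 11 := by
  have h := d_rec 11 10
  norm_num [dv_11_10, dv_11_11, d_vanish (show 11 < 12 by norm_num)] at h
  exact h

lemma dv_12_12 : d 12 12 = 1 := by
  have h := d_rec 11 11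
  norm_num [dv_11_11, d_vanish (show 11 < 12 by norm_num), d_vanish (show 11 < 13 by norm_num)] at h
  exact h

lemma dv_13_0 : d 13 0 = 11298 := by
  have h := d_zero 12
  norm_num [dv_12_1] at h
  exact h

lemma dv_13_1 : d 13 1 = 30537 := by
  have h := d_rec 12 0
  norm_num [dv_12_0, dv_12_1, dv_12_2] at h
  exact h

lemma dv_13_2 : d 13 2 = 41262 := by
  have h := d_rec 12 1
  norm_num [dv_12_1, dv_12_2, dv_12_3] at h
  exact h

lemma dv_13_3 : d 13 3 = 42042 := by
  have h := d_rec 12 2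
  norm_num [dv_12_2, dv_12_3, dv_12_4] at h
  exact h

lemma dv_13_4 : d 13 4 = 35178 := by
  have h := d_rec 12 3
  norm_num [dv_12_3, dv_12_4, dv_12_5] at h
  exact h

lemma dv_13_5 : d 13 5 = 24882 := by
  have h := d_rec 12 4
  norm_num [dv_12_4, dv_12_5, dv_12_6] at h
  exact h

lemma dv_13_6 : d 13 6 = 15015 := by
  have h := d_rec 12 5
  norm_num [dv_12_5, dv_12_6, dv_12_7] at h
  exact h

lemma dv_13_7 : d 13 7 = 7722 := by
  have h := d_rec 12 6
  norm_num [dv_12_6, dv_12_7, dv_12_8] at h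
  exact h

lemma dv_13_8 : d 13 8 = 3354 := by
  have h := d_rec 12 7
  norm_num [dv_12_7, dv_12_8, dv_12_9] at h
  exact h

lemma dv_13_9 : d 13 9 = 1209 := by
  have h := d_rec 12 8
  norm_num [dv_12_8, dv_12_9, dv_12_10] at h
  exact h

lemma dv_13_10 : d 13 10 = 351 := by
  have h := d_rec 12 9
  norm_num [dv_12_9, dv_12_10, dv_12_11] at h
  exact h

lemma dv_13_11 : d 13 11 = 78 := by
  have h := d_rec 12 10
  norm_num [dv_12_10, dv_12_11, dv_12_12] at h
  exact h

lemma dv_13_12 : d 13 12 = 12 := by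
  have h := d_rec 12 11
  norm_num [dv_12_11, dv_12_12, d_vanish (show 12 < 13 by norm_num)] at h
  exact h

lemma dv_13_13 : d 13 13 = 1 := by
  have h := d_rec 12 12
  norm_num [dv_12_12, d_vanish (show 12 < 13 by norm_num), d_vanish (show 12 < 14 by norm_num)] at h
  exact h

lemma dv_14_0 : d 14 0 = 30537 := by
  have h := d_zero 13
  norm_num [dv_13_1] at h
  exact h

lemma dv_14_1 : d 14 1 = 83097 := by
  have h := d_rec 13 0
  norm_num [dv_13_0, dv_13_1, dv_13_2] at h
  exact h

lemma dv_14_2 : d 14 2 = 113841 := by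
  have h := d_rec 13 1
  norm_num [dv_13_1, dv_13_2, dv_13_3] at h
  exact h

lemma dv_14_3 : d 14 3 = 118482 := by
  have h := d_rec 13 2
  norm_num [dv_13_2, dv_13_3, dv_13_4] at h
  exact h

lemma dv_14_4 : d 14 4 = 102102 := by
  have h := d_rec 13 3
  norm_num [dv_13_3, dv_13_4, dv_13_5] at h
  exact h

lemma dv_14_5 : d 14 5 = 75075 := by
  have h := d_rec 13 4
  norm_num [dv_13_4, dv_13_5, dv_13_6] at h
  exact h

lemma dv_14_6 : d 14 6 = 47619 := by
  have h := d_rec 13 5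
  norm_num [dv_13_5, dv_13_6, dv_13_7] at h
  exact h

lemma dv_14_7 : d 14 7 = 26091 := by
  have h := d_rec 13 6
  norm_num [dv_13_6, dv_13_7, dv_13_8] at h
  exact h

lemma dv_14_8 : d 14 8 = 12285 := by
  have h := d_rec 13 7
  norm_num [dv_13_7, dv_13_8, dv_13_9] at h
  exact h

lemma dv_14_9 : d 14 9 = 4914 := by
  have h := d_rec 13 8
  norm_num [dv_13_8, dv_13_9, dv_13_10] at h
  exact h

lemma dv_14_10 : d 14 10 = 1638 := by
  have h := d_rec 13 9
  norm_num [dv_13_9, dv_13_10, dv_13_11] at h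
  exact h

lemma dv_14_11 : d 14 11 = 441 := by
  have h := d_rec 13 10
  norm_num [dv_13_10, dv_13_11, dv_13_12] at h
  exact h

lemma dv_14_12 : d 14 12 = 91 := by
  have h := d_rec 13 11
  norm_num [dv_13_11, dv_13_12, dv_13_13] at h
  exact h

lemma dv_14_13 : d 14 13 = 13 := by
  have h := d_rec 13 12
  norm_num [dv_13_12, dv_13_13, d_vanish (show 13 < 14 by norm_num)] at h
  exact h

lemma dv_14_14 : d 14 14 = 1 := by
  have h := d_rec 13 13
  norm_num [dv_13_13, d_vanish (show 13 < 14 by norm_num), d_vanish (show 13 < 15 by norm_num)] at h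
  exact h

lemma dv_15_0 : d 15 0 = 83097 := by
  have h := d_zero 14
  norm_num [dv_14_1] at h
  exact h

lemma dv_15_1 : d 15 1 = 227475 := by
  have h := d_rec 14 0
  norm_num [dv_14_0, dv_14_1, dv_14_2] at h
  exact h

lemma dv_15_2 : d 15 2 = 315420 := by
  have h := d_rec 14 1
  norm_num [dv_14_1, dv_14_2, dv_14_3] at h
  exact h

lemma dv_15_3 : d 15 3 = 334425 := by
  have h := d_rec 14 2
  norm_num [dv_14_2, dv_14_3, dv_14_4] at h
  exact h

lemma dv_15_4 : d 15 4 = 295659 := by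
  have h := d_rec 14 3
  norm_num [dv_14_3, dv_14_4, dv_14_5] at h
  exact h

lemma dv_15_5 : d 15 5 = 224796 := by
  have h := d_rec 14 4
  norm_num [dv_14_4, dv_14_5, dv_14_6] at h
  exact h

lemma dv_15_6 : d 15 6 = 148785 := by
  have h := d_rec 14 5
  norm_num [dv_14_5, dv_14_6, dv_14_7] at h
  exact h

lemma dv_15_7 : d 15 7 = 85995 := by
  have h := d_rec 14 6
  norm_num [dv_14_6, dv_14_7, dv_14_8] at h
  exact h

lemma dv_15_8 : d 15 8 = 43290 := by
  have h := d_rec 14 7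
  norm_num [dv_14_7, dv_14_8, dv_14_9] at h
  exact h

lemma dv_15_9 : d 15 9 = 18837 := by
  have h := d_rec 14 8
  norm_num [dv_14_8, dv_14_9, dv_14_10] at h
  exact h

lemma dv_15_10 : d 15 10 = 6993 := by
  have h := d_rec 14 9
  norm_num [dv_14_9, dv_14_10, dv_14_11] at h
  exact h

lemma dv_15_11 : d 15 11 = 2170 := by
  have h := d_rec 14 10
  norm_num [dv_14_10, dv_14_11, dv_14_12] at h
  exact h

lemma dv_15_12 : d 15 12 = 545 := by
  have h := d_rec 14 11
  norm_num [dv_14_11, dv_14_12, dv_14_13] at h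
  exact h

lemma dv_15_13 : d 15 13 = 105 := by
  have h := d_rec 14 12
  norm_num [dv_14_12, dv_14_13, dv_14_14] at h
  exact h

lemma dv_15_14 : d 15 14 = 14 := by
  have h := d_rec 14 13
  norm_num [dv_14_13, dv_14_14, d_vanish (show 14 < 15 by norm_num)] at h
  exact h

lemma dv_15_15 : d 15 15 = 1 := by
  have h := d_rec 14 14
  norm_num [dv_14_14, d_vanish (show 14 < 15 by norm_num), d_vanish (show 14 < 16 by norm_num)] at h
  exact h

lemma dv_16_0 : d 16 0 = 227475 := by
  have h := d_zero 15
  norm_num [dv_15_1] at h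
  exact h

lemma dv_16_1 : d 16 1 = 625992 := by
  have h := d_rec 15 0
  norm_num [dv_15_0, dv_15_1, dv_15_2] at h
  exact h

lemma dv_16_2 : d 16 2 = 877320 := by
  have h := d_rec 15 1
  norm_num [dv_15_1, dv_15_2, dv_15_3] at h
  exact h

lemma dv_16_3 : d 16 3 = 945504 := by
  have h := d_rec 15 2
  norm_num [dv_15_2, dv_15_3, dv_15_4] at h
  exact h

lemma dv_16_4 : d 16 4 = 854880 := by
  have h := d_rec 15 3
  norm_num [dv_15_3, dv_15_4, dv_15_5] at h
  exact h

lemma dv_16_5 : d 16 5 = 669240 := by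
  have h := d_rec 15 4
  norm_num [dv_15_4, dv_15_5, dv_15_6] at h
  exact h

lemma dv_16_6 : d 16 6 = 459576 := by
  have h := d_rec 15 5
  norm_num [dv_15_5, dv_15_6, dv_15_7] at h
  exact h

lemma dv_16_7 : d 16 7 = 278070 := by
  have h := d_rec 15 6
  norm_num [dv_15_6, dv_15_7, dv_15_8] at h
  exact h

lemma dv_16_8 : d 16 8 = 148122 := by
  have h := d_rec 15 7
  norm_num [dv_15_7, dv_15_8, dv_15_9] at h
  exact h

lemma dv_16_9 : d 16 9 = 69120 := by
  have h := d_rec 15 8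
  norm_num [dv_15_8, dv_15_9, dv_15_10] at h
  exact h

lemma dv_16_10 : d 16 10 = 28000 := by
  have h := d_rec 15 9
  norm_num [dv_15_9, dv_15_10, dv_15_11] at h
  exact h

lemma dv_16_11 : d 16 11 = 9708 := by
  have h := d_rec 15 10
  norm_num [dv_15_10, dv_15_11, dv_15_12] at h
  exact h

lemma dv_16_12 : d 16 12 = 2820 := by
  have h := d_rec 15 11
  norm_num [dv_15_11, dv_15_12, dv_15_13] at h
  exact h

lemma dv_16_13 : d 16 13 = 664 := by
  have h := d_rec 15 12
  norm_num [dv_15_12, dv_15_13, dv_15_14] at h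
  exact h

lemma dv_16_14 : d 16 14 = 120 := by
  have h := d_rec 15 13
  norm_num [dv_15_13, dv_15_14, dv_15_15] at h
  exact h

lemma dv_16_15 : d 16 15 = 15 := by
  have h := d_rec 15 14
  norm_num [dv_15_14, dv_15_15, d_vanish (show 15 < 16 by norm_num)] at h
  exact h

lemma dv_16_16 : d 16 16 = 1 := by
  have h := d_rec 15 15
  norm_num [dv_15_15, d_vanish (show 15 < 16 by norm_num), d_vanish (show 15 < 17 by norm_num)] at h
  exact h

lemma dv_17_0 : d 17 0 = 625992 := by
  have h := d_zero 16
  norm_num [dv_16_1] at h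
  exact h

lemma dv_17_1 : d 17 1 = 1730787 := by
  have h := d_rec 16 0
  norm_num [dv_16_0, dv_16_1, dv_16_2] at h
  exact h

lemma dv_17_2 : d 17 2 = 2448816 := by
  have h := d_rec 16 1
  norm_num [dv_16_1, dv_16_2, dv_16_3] at h
  exact h

lemma dv_17_3 : d 17 3 = 2677704 := by
  have h := d_rec 16 2
  norm_num [dv_16_2, dv_16_3, dv_16_4] at h
  exact h

lemma dv_17_4 : d 17 4 = 2469624 := by
  have h := d_rec 16 3
  norm_num [dv_16_3, dv_16_4, dv_16_5] at h
  exact h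

lemma dv_17_5 : d 17 5 = 1983696 := by
  have h := d_rec 16 4
  norm_num [dv_16_4, dv_16_5, dv_16_6] at h
  exact h

lemma dv_17_6 : d 17 6 = 1406886 := by
  have h := d_rec 16 5
  norm_num [dv_16_5, dv_16_6, dv_16_7] at h
  exact h

lemma dv_17_7 : d 17 7 = 885768 := by
  have h := d_rec 16 6
  norm_num [dv_16_6, dv_16_7, dv_16_8] at h
  exact h

lemma dv_17_8 : d 17 8 = 495312 := by
  have h := d_rec 16 7
  norm_num [dv_16_7, dv_16_8, dv_16_9] at h
  exact h

lemma dv_17_9 : d 17 9 = 245242 := by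
  have h := d_rec 16 8
  norm_num [dv_16_8, dv_16_9, dv_16_10] at h
  exact h

lemma dv_17_10 : d 17 10 = 106828 := by
  have h := d_rec 16 9
  norm_num [dv_16_9, dv_16_10, dv_16_11] at h
  exact h

lemma dv_17_11 : d 17 11 = 40528 := by
  have h := d_rec 16 10
  norm_num [dv_16_10, dv_16_11, dv_16_12] at h
  exact h

lemma dv_17_12 : d 17 12 = 13192 := by
  have h := d_rec 16 11
  norm_num [dv_16_11, dv_16_12, dv_16_13] at h
  exact h

lemma dv_17_13 : d 17 13 = 3604 := by
  have h := d_rec 16 12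
  norm_num [dv_16_12, dv_16_13, dv_16_14] at h
  exact h

lemma dv_17_14 : d 17 14 = 799 := by
  have h := d_rec 16 13
  norm_num [dv_16_13, dv_16_14, dv_16_15] at h
  exact h

lemma dv_17_15 : d 17 15 = 136 := by
  have h := d_rec 16 14
  norm_num [dv_16_14, dv_16_15, dv_16_16] at h
  exact h

lemma dv_17_16 : d 17 16 = 16 := by
  have h := d_rec 16 15
  norm_num [dv_16_15, dv_16_16, d_vanish (show 16 < 17 by norm_num)] at h
  exact h

lemma dv_17_17 : d 17 17 = 1 := by
  have h := d_rec 16 16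
  norm_num [dv_16_16, d_vanish (show 16 < 17 by norm_num), d_vanish (show 16 < 18 by norm_num)] at h
  exact h

lemma dv_18_0 : d 18 0 = 1730787 := by
  have h := d_zero 17
  norm_num [dv_17_1] at h
  exact h

lemma dv_18_1 : d 18 1 = 4805595 := by
  have h := d_rec 17 0
  norm_num [dv_17_0, dv_17_1, dv_17_2] at h
  exact h

lemma dv_18_2 : d 18 2 = 6857307 := by
  have h := d_rec 17 1
  norm_num [dv_17_1, dv_17_2, dv_17_3] at h
  exact h

lemma dv_18_3 : d 18 3 = 7596144 := by
  have h := d_rec 17 2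
  norm_num [dv_17_2, dv_17_3, dv_17_4] at h
  exact h

lemma dv_18_4 : d 18 4 = 7131024 := by
  have h := d_rec 17 3
  norm_num [dv_17_3, dv_17_4, dv_17_5] at h
  exact h

lemma dv_18_5 : d 18 5 = 5860206 := by
  have h := d_rec 17 4
  norm_num [dv_17_4, dv_17_5, dv_17_6] at h
  exact h

lemma dv_18_6 : d 18 6 = 4276350 := by
  have h := d_rec 17 5
  norm_num [dv_17_5, dv_17_6, dv_17_7] at h
  exact h

lemma dv_18_7 : d 18 7 = 2787966 := by
  have h := d_rec 17 6
  norm_num [dv_17_6, dv_17_7, dv_17_8] at h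
  exact h

lemma dv_18_8 : d 18 8 = 1626322 := by
  have h := d_rec 17 7
  norm_num [dv_17_7, dv_17_8, dv_17_9] at h
  exact h

lemma dv_18_9 : d 18 9 = 847382 := by
  have h := d_rec 17 8
  norm_num [dv_17_8, dv_17_9, dv_17_10] at h
  exact h

lemma dv_18_10 : d 18 10 = 392598 := by
  have h := d_rec 17 9
  norm_num [dv_17_9, dv_17_10, dv_17_11] at h
  exact h

lemma dv_18_11 : d 18 11 = 160548 := by
  have h := d_rec 17 10
  norm_num [dv_17_10, dv_17_11, dv_17_12] at h
  exact h

lemma dv_18_12 : d 18 12 = 57324 := by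
  have h := d_rec 17 11
  norm_num [dv_17_11, dv_17_12, dv_17_13] at h
  exact h

lemma dv_18_13 : d 18 13 = 17595 := by
  have h := d_rec 17 12
  norm_num [dv_17_12, dv_17_13, dv_17_14] at h
  exact h

lemma dv_18_14 : d 18 14 = 4539 := by
  have h := d_rec 17 13
  norm_num [dv_17_13, dv_17_14, dv_17_15] at h
  exact h

lemma dv_18_15 : d 18 15 = 951 := by
  have h := d_rec 17 14
  norm_num [dv_17_14, dv_17_15, dv_17_16] at h
  exact h

lemma dv_18_16 : d 18 16 = 153 := by
  have h := d_rec 17 15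
  norm_num [dv_17_15, dv_17_16, dv_17_17] at h
  exact h

lemma dv_18_17 : d 18 17 = 17 := by
  have h := d_rec 17 16
  norm_num [dv_17_16, dv_17_17, d_vanish (show 17 < 18 by norm_num)] at h
  exact h

lemma dv_18_18 : d 18 18 = 1 := by
  have h := d_rec 17 17
  norm_num [dv_17_17, d_vanish (show 17 < 18 by norm_num), d_vanish (show 17 < 19 by norm_num)] at h
  exact h

lemma dv_19_0 : d 19 0 = 4805595 := by
  have h := d_zero 18
  norm_num [dv_18_1] at h
  exact h

lemma dv_19_1 : d 19 1 = 13393689 := by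
  have h := d_rec 18 0
  norm_num [dv_18_0, dv_18_1, dv_18_2] at h
  exact h

lemma dv_19_2 : d 19 2 = 19259046 := by
  have h := d_rec 18 1
  norm_num [dv_18_1, dv_18_2, dv_18_3] at h
  exact h

lemma dv_19_3 : d 19 3 = 21584475 := by
  have h := d_rec 18 2
  norm_num [dv_18_2, dv_18_3, dv_18_4] at h
  exact h

lemma dv_19_4 : d 19 4 = 20587374 := by
  have h := d_rec 18 3
  norm_num [dv_18_3, dv_18_4, dv_18_5] at h
  exact h

lemma dv_19_5 : d 19 5 = 17267580 := by
  have h := d_rec 18 4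
  norm_num [dv_18_4, dv_18_5, dv_18_6] at h
  exact h

lemma dv_19_6 : d 19 6 = 12924522 := by
  have h := d_rec 18 5
  norm_num [dv_18_5, dv_18_6, dv_18_7] at h
  exact h

lemma dv_19_7 : d 19 7 = 8690638 := by
  have h := d_rec 18 6
  norm_num [dv_18_6, dv_18_7, dv_18_8] at h
  exact h

lemma dv_19_8 : d 19 8 = 5261670 := by
  have h := d_rec 18 7
  norm_num [dv_18_7, dv_18_8, dv_18_9] at h
  exact h

lemma dv_19_9 : d 19 9 = 2866302 := by
  have h := d_rec 18 8
  norm_num [dv_18_8, dv_18_9, dv_18_10] at h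
  exact h

lemma dv_19_10 : d 19 10 = 1400528 := by
  have h := d_rec 18 9
  norm_num [dv_18_9, dv_18_10, dv_18_11] at h
  exact h

lemma dv_19_11 : d 19 11 = 610470 := by
  have h := d_rec 18 10
  norm_num [dv_18_10, dv_18_11, dv_18_12] at h
  exact h

lemma dv_19_12 : d 19 12 = 235467 := by
  have h := d_rec 18 11
  norm_num [dv_18_11, dv_18_12, dv_18_13] at h
  exact h

lemma dv_19_13 : d 19 13 = 79458 := by
  have h := d_rec 18 12
  norm_num [dv_18_12, dv_18_13, dv_18_14] at h
  exact h

lemma dv_19_14 : d 19 14 = 23085 := by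
  have h := d_rec 18 13
  norm_num [dv_18_13, dv_18_14, dv_18_15] at h
  exact h

lemma dv_19_15 : d 19 15 = 5643 := by
  have h := d_rec 18 14
  norm_num [dv_18_14, dv_18_15, dv_18_16] at h
  exact h

lemma dv_19_16 : d 19 16 = 1121 := by
  have h := d_rec 18 15
  norm_num [dv_18_15, dv_18_16, dv_18_17] at h
  exact h

lemma dv_19_17 : d 19 17 = 171 := by
  have h := d_rec 18 16
  norm_num [dv_18_16, dv_18_17, dv_18_18] at h
  exact h

lemma dv_20_0 : d 20 0 = 13393689 := by
  have h := d_zero 19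
  norm_num [dv_19_1] at h
  exact h

lemma dv_20_1 : d 20 1 = 37458330 := by
  have h := d_rec 19 0
  norm_num [dv_19_0, dv_19_1, dv_19_2] at h
  exact h

lemma dv_20_2 : d 20 2 = 54237210 := by
  have h := d_rec 19 1
  norm_num [dv_19_1, dv_19_2, dv_19_3] at h
  exact h

lemma dv_20_3 : d 20 3 = 61430895 := by
  have h := d_rec 19 2
  norm_num [dv_19_2, dv_19_3, dv_19_4] at h
  exact h

lemma dv_20_4 : d 20 4 = 59439429 := by
  have h := d_rec 19 3
  norm_num [dv_19_3, dv_19_4, dv_19_5] at h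
  exact h

lemma dv_20_5 : d 20 5 = 50779476 := by
  have h := d_rec 19 4
  norm_num [dv_19_4, dv_19_5, dv_19_6] at h
  exact h

lemma dv_20_6 : d 20 6 = 38882740 := by
  have h := d_rec 19 5
  norm_num [dv_19_5, dv_19_6, dv_19_7] at h
  exact h

lemma dv_20_7 : d 20 7 = 26876830 := by
  have h := d_rec 19 6
  norm_num [dv_19_6, dv_19_7, dv_19_8] at h
  exact h

lemma dv_20_8 : d 20 8 = 16818610 := by
  have h := d_rec 19 7
  norm_num [dv_19_7, dv_19_8, dv_19_9] at h
  exact h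

lemma dv_20_9 : d 20 9 = 9528500 := by
  have h := d_rec 19 8
  norm_num [dv_19_8, dv_19_9, dv_19_10] at h
  exact h

lemma dv_20_10 : d 20 10 = 4877300 := by
  have h := d_rec 19 9
  norm_num [dv_19_9, dv_19_10, dv_19_11] at h
  exact h

lemma dv_20_11 : d 20 11 = 2246465 := by
  have h := d_rec 19 10
  norm_num [dv_19_10, dv_19_11, dv_19_12] at h
  exact h

lemma dv_20_12 : d 20 12 = 925395 := by
  have h := d_rec 19 11
  norm_num [dv_19_11, dv_19_12, dv_19_13] at h
  exact h

lemma dv_20_13 : d 20 13 = 338010 := by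
  have h := d_rec 19 12
  norm_num [dv_19_12, dv_19_13, dv_19_14] at h
  exact h

lemma dv_20_14 : d 20 14 = 108186 := by
  have h := d_rec 19 13
  norm_num [dv_19_13, dv_19_14, dv_19_15] at h
  exact h

lemma dv_20_15 : d 20 15 = 29849 := by
  have h := d_rec 19 14
  norm_num [dv_19_14, dv_19_15, dv_19_16] at h
  exact h

lemma dv_20_16 : d 20 16 = 6935 := by
  have h := d_rec 19 15
  norm_num [dv_19_15, dv_19_16, dv_19_17] at h
  exact h

lemma dv_21_0 : d 21 0 = 37458330 := by
  have h := d_zero 20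
  norm_num [dv_20_1] at h
  exact h

lemma dv_21_1 : d 21 1 = 105089229 := by
  have h := d_rec 20 0
  norm_num [dv_20_0, dv_20_1, dv_20_2] at h
  exact h

lemma dv_21_2 : d 21 2 = 153126435 := by
  have h := d_rec 20 1
  norm_num [dv_20_1, dv_20_2, dv_20_3] at h
  exact h

lemma dv_21_3 : d 21 3 = 175107534 := by
  have h := d_rec 20 2
  norm_num [dv_20_2, dv_20_3, dv_20_4] at h
  exact h

lemma dv_21_4 : d 21 4 = 171649800 := by
  have h := d_rec 20 3
  norm_num [dv_20_3, dv_20_4, dv_20_5] at h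
  exact h

lemma dv_21_5 : d 21 5 = 149101645 := by
  have h := d_rec 20 4
  norm_num [dv_20_4, dv_20_5, dv_20_6] at h
  exact h

lemma dv_21_6 : d 21 6 = 116539046 := by
  have h := d_rec 20 5
  norm_num [dv_20_5, dv_20_6, dv_20_7] at h
  exact h

lemma dv_21_7 : d 21 7 = 82578180 := by
  have h := d_rec 20 6
  norm_num [dv_20_6, dv_20_7, dv_20_8] at h
  exact h

lemma dv_21_8 : d 21 8 = 53223940 := by
  have h := d_rec 20 7
  norm_num [dv_20_7, dv_20_8, dv_20_9] at h
  exact h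

lemma dv_21_9 : d 21 9 = 31224410 := by
  have h := d_rec 20 8
  norm_num [dv_20_8, dv_20_9, dv_20_10] at h
  exact h

lemma dv_21_10 : d 21 10 = 16652265 := by
  have h := d_rec 20 9
  norm_num [dv_20_9, dv_20_10, dv_20_11] at h
  exact h

lemma dv_21_11 : d 21 11 = 8049160 := by
  have h := d_rec 20 10
  norm_num [dv_20_10, dv_20_11, dv_20_12] at h
  exact h

lemma dv_21_12 : d 21 12 = 3509870 := by
  have h := d_rec 20 11
  norm_num [dv_20_11, dv_20_12, dv_20_13] at h
  exact h

lemma dv_21_13 : d 21 13 = 1371591 := by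
  have h := d_rec 20 12
  norm_num [dv_20_12, dv_20_13, dv_20_14] at h
  exact h

lemma dv_21_14 : d 21 14 = 476045 := by
  have h := d_rec 20 13
  norm_num [dv_20_13, dv_20_14, dv_20_15] at h
  exact h

lemma dv_21_15 : d 21 15 = 144970 := by
  have h := d_rec 20 14
  norm_num [dv_20_14, dv_20_15, dv_20_16] at h
  exact h

lemma dv_22_0 : d 22 0 = 105089229 := by
  have h := d_zero 21
  norm_num [dv_21_1] at h
  exact h

lemma dv_22_1 : d 22 1 = 295673994 := by
  have h := d_rec 21 0
  norm_num [dv_21_0, dv_21_1, dv_21_2] at h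
  exact h

lemma dv_22_2 : d 22 2 = 433323198 := by
  have h := d_rec 21 1
  norm_num [dv_21_1, dv_21_2, dv_21_3] at h
  exact h

lemma dv_22_3 : d 22 3 = 499883769 := by
  have h := d_rec 21 2
  norm_num [dv_21_2, dv_21_3, dv_21_4] at h
  exact h

lemma dv_22_4 : d 22 4 = 495858979 := by
  have h := d_rec 21 3
  norm_num [dv_21_3, dv_21_4, dv_21_5] at h
  exact h

lemma dv_22_5 : d 22 5 = 437290491 := by
  have h := d_rec 21 4
  norm_num [dv_21_4, dv_21_5, dv_21_6] at h
  exact h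

lemma dv_22_6 : d 22 6 = 348218871 := by
  have h := d_rec 21 5
  norm_num [dv_21_5, dv_21_6, dv_21_7] at h
  exact h

lemma dv_22_7 : d 22 7 = 252341166 := by
  have h := d_rec 21 6
  norm_num [dv_21_6, dv_21_7, dv_21_8] at h
  exact h

lemma dv_22_8 : d 22 8 = 167026530 := by
  have h := d_rec 21 7
  norm_num [dv_21_7, dv_21_8, dv_21_9] at h
  exact h

lemma dv_22_9 : d 22 9 = 101100615 := by
  have h := d_rec 21 8
  norm_num [dv_21_8, dv_21_9, dv_21_10] at h
  exact h

lemma dv_22_10 : d 22 10 = 55925835 := by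
  have h := d_rec 21 9
  norm_num [dv_21_9, dv_21_10, dv_21_11] at h
  exact h

lemma dv_22_11 : d 22 11 = 28211295 := by
  have h := d_rec 21 10
  norm_num [dv_21_10, dv_21_11, dv_21_12] at h
  exact h

lemma dv_22_12 : d 22 12 = 12930621 := by
  have h := d_rec 21 11
  norm_num [dv_21_11, dv_21_12, dv_21_13] at h
  exact h

lemma dv_22_13 : d 22 13 = 5357506 := by
  have h := d_rec 21 12
  norm_num [dv_21_12, dv_21_13, dv_21_14] at h
  exact h

lemma dv_22_14 : d 22 14 = 1992606 := by
  have h := d_rec 21 13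
  norm_num [dv_21_13, dv_21_14, dv_21_15] at h
  exact h

lemma dv_23_0 : d 23 0 = 295673994 := by
  have h := d_zero 22
  norm_num [dv_22_1] at h
  exact h

lemma dv_23_1 : d 23 1 = 834086421 := by
  have h := d_rec 22 0
  norm_num [dv_22_0, dv_22_1, dv_22_2] at h
  exact h

lemma dv_23_2 : d 23 2 = 1228880961 := by
  have h := d_rec 22 1
  norm_num [dv_22_1, dv_22_2, dv_22_3] at h
  exact h

lemma dv_23_3 : d 23 3 = 1429065946 := by
  have h := d_rec 22 2
  norm_num [dv_22_2, dv_22_3, dv_22_4] at h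
  exact h

lemma dv_23_4 : d 23 4 = 1433033239 := by
  have h := d_rec 22 3
  norm_num [dv_22_3, dv_22_4, dv_22_5] at h
  exact h

lemma dv_23_5 : d 23 5 = 1281368341 := by
  have h := d_rec 22 4
  norm_num [dv_22_4, dv_22_5, dv_22_6] at h
  exact h

lemma dv_23_6 : d 23 6 = 1037850528 := by
  have h := d_rec 22 5
  norm_num [dv_22_5, dv_22_6, dv_22_7] at h
  exact h

lemma dv_23_7 : d 23 7 = 767586567 := by
  have h := d_rec 22 6
  norm_num [dv_22_6, dv_22_7, dv_22_8] at h
  exact h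

lemma dv_23_8 : d 23 8 = 520468311 := by
  have h := d_rec 22 7
  norm_num [dv_22_7, dv_22_8, dv_22_9] at h
  exact h

lemma dv_23_9 : d 23 9 = 324052980 := by
  have h := d_rec 22 8
  norm_num [dv_22_8, dv_22_9, dv_22_10] at h
  exact h

lemma dv_23_10 : d 23 10 = 185237745 := by
  have h := d_rec 22 9
  norm_num [dv_22_9, dv_22_10, dv_22_11] at h
  exact h

lemma dv_23_11 : d 23 11 = 97067751 := by
  have h := d_rec 22 10
  norm_num [dv_22_10, dv_22_11, dv_22_12] at h
  exact h

lemma dv_23_12 : d 23 12 = 46499422 := by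
  have h := d_rec 22 11
  norm_num [dv_22_11, dv_22_12, dv_22_13] at h
  exact h

lemma dv_23_13 : d 23 13 = 20280733 := by
  have h := d_rec 22 12
  norm_num [dv_22_12, dv_22_13, dv_22_14] at h
  exact h

lemma dv_24_0 : d 24 0 = 834086421 := by
  have h := d_zero 23
  norm_num [dv_23_1] at h
  exact h

lemma dv_24_1 : d 24 1 = 2358641376 := by
  have h := d_rec 23 0
  norm_num [dv_23_0, dv_23_1, dv_23_2] at h
  exact h

lemma dv_24_2 : d 24 2 = 3492033328 := by
  have h := d_rec 23 1
  norm_num [dv_23_1, dv_23_2, dv_23_3] at h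
  exact h

lemma dv_24_3 : d 24 3 = 4090980146 := by
  have h := d_rec 23 2
  norm_num [dv_23_2, dv_23_3, dv_23_4] at h
  exact h

lemma dv_24_4 : d 24 4 = 4143467526 := by
  have h := d_rec 23 3
  norm_num [dv_23_3, dv_23_4, dv_23_5] at h
  exact h

lemma dv_24_5 : d 24 5 = 3752252108 := by
  have h := d_rec 23 4
  norm_num [dv_23_4, dv_23_5, dv_23_6] at h
  exact h

lemma dv_24_6 : d 24 6 = 3086805436 := by
  have h := d_rec 23 5
  norm_num [dv_23_5, dv_23_6, dv_23_7] at h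
  exact h

lemma dv_24_7 : d 24 7 = 2325905406 := by
  have h := d_rec 23 6
  norm_num [dv_23_6, dv_23_7, dv_23_8] at h
  exact h

lemma dv_24_8 : d 24 8 = 1612107858 := by
  have h := d_rec 23 7
  norm_num [dv_23_7, dv_23_8, dv_23_9] at h
  exact h

lemma dv_24_9 : d 24 9 = 1029759036 := by
  have h := d_rec 23 8
  norm_num [dv_23_8, dv_23_9, dv_23_10] at h
  exact h

lemma dv_24_10 : d 24 10 = 606358476 := by
  have h := d_rec 23 9
  norm_num [dv_23_9, dv_23_10, dv_23_11] at h
  exact h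

lemma dv_24_11 : d 24 11 = 328804918 := by
  have h := d_rec 23 10
  norm_num [dv_23_10, dv_23_11, dv_23_12] at h
  exact h

lemma dv_24_12 : d 24 12 = 163847906 := by
  have h := d_rec 23 11
  norm_num [dv_23_11, dv_23_12, dv_23_13] at h
  exact h

lemma dv_25_0 : d 25 0 = 2358641376 := by
  have h := d_zero 24
  norm_num [dv_24_1] at h
  exact h

lemma dv_25_1 : d 25 1 = 6684761125 := by
  have h := d_rec 24 0
  norm_num [dv_24_0, dv_24_1, dv_24_2] at h
  exact h

lemma dv_25_2 : d 25 2 = 9941654850 := by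
  have h := d_rec 24 1
  norm_num [dv_24_1, dv_24_2, dv_24_3] at h
  exact h

lemma dv_25_3 : d 25 3 = 11726481000 := by
  have h := d_rec 24 2
  norm_num [dv_24_2, dv_24_3, dv_24_4] at h
  exact h

lemma dv_25_4 : d 25 4 = 11986699780 := by
  have h := d_rec 24 3
  norm_num [dv_24_3, dv_24_4, dv_24_5] at h
  exact h

lemma dv_25_5 : d 25 5 = 10982525070 := by
  have h := d_rec 24 4
  norm_num [dv_24_4, dv_24_5, dv_24_6] at h
  exact h

lemma dv_25_6 : d 25 6 = 9164962950 := by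
  have h := d_rec 24 5
  norm_num [dv_24_5, dv_24_6, dv_24_7] at h
  exact h

lemma dv_25_7 : d 25 7 = 7024818700 := by
  have h := d_rec 24 6
  norm_num [dv_24_6, dv_24_7, dv_24_8] at h
  exact h

lemma dv_25_8 : d 25 8 = 4967772300 := by
  have h := d_rec 24 7
  norm_num [dv_24_7, dv_24_8, dv_24_9] at h
  exact h

lemma dv_25_9 : d 25 9 = 3248225370 := by
  have h := d_rec 24 8
  norm_num [dv_24_8, dv_24_9, dv_24_10] at h
  exact h

lemma dv_25_10 : d 25 10 = 1964922430 := by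
  have h := d_rec 24 9
  norm_num [dv_24_9, dv_24_10, dv_24_11] at h
  exact h

lemma dv_25_11 : d 25 11 = 1099011300 := by
  have h := d_rec 24 10
  norm_num [dv_24_10, dv_24_11, dv_24_12] at h
  exact h

lemma dv_26_0 : d 26 0 = 6684761125 := by
  have h := d_zero 25
  norm_num [dv_25_1] at h
  exact h

lemma dv_26_1 : d 26 1 = 18985057351 := by
  have h := d_rec 25 0
  norm_num [dv_25_0, dv_25_1, dv_25_2] at h
  exact h

lemma dv_26_2 : d 26 2 = 28352896975 := by
  have h := d_rec 25 1
  norm_num [dv_25_1, dv_25_2, dv_25_3] at h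
  exact h

lemma dv_26_3 : d 26 3 = 33654835630 := by
  have h := d_rec 25 2
  norm_num [dv_25_2, dv_25_3, dv_25_4] at h
  exact h

lemma dv_26_4 : d 26 4 = 34695705850 := by
  have h := d_rec 25 3
  norm_num [dv_25_3, dv_25_4, dv_25_5] at h
  exact h

lemma dv_26_5 : d 26 5 = 32134187800 := by
  have h := d_rec 25 4
  norm_num [dv_25_4, dv_25_5, dv_25_6] at h
  exact h

lemma dv_26_6 : d 26 6 = 27172306720 := by
  have h := d_rec 25 5
  norm_num [dv_25_5, dv_25_6, dv_25_7] at h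
  exact h

lemma dv_26_7 : d 26 7 = 21157553950 := by
  have h := d_rec 25 6
  norm_num [dv_25_6, dv_25_7, dv_25_8] at h
  exact h

lemma dv_26_8 : d 26 8 = 15240816370 := by
  have h := d_rec 25 7
  norm_num [dv_25_7, dv_25_8, dv_25_9] at h
  exact h

lemma dv_26_9 : d 26 9 = 10180920100 := by
  have h := d_rec 25 8
  norm_num [dv_25_8, dv_25_9, dv_25_10] at h
  exact h

lemma dv_26_10 : d 26 10 = 6312159100 := by
  have h := d_rec 25 9
  norm_num [dv_25_9, dv_25_10, dv_25_11] at h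
  exact h

lemma dv_27_0 : d 27 0 = 18985057351 := by
  have h := d_zero 26
  norm_num [dv_26_1] at h
  exact h

lemma dv_27_1 : d 27 1 = 54022715451 := by
  have h := d_rec 26 0
  norm_num [dv_26_0, dv_26_1, dv_26_2] at h
  exact h

lemma dv_27_2 : d 27 2 = 80992789956 := by
  have h := d_rec 26 1
  norm_num [dv_26_1, dv_26_2, dv_26_3] at h
  exact h

lemma dv_27_3 : d 27 3 = 96703438455 := by
  have h := d_rec 26 2
  norm_num [dv_26_2, dv_26_3, dv_26_4] at h
  exact h

lemma dv_27_4 : d 27 4 = 100484729280 := by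
  have h := d_rec 26 3
  norm_num [dv_26_3, dv_26_4, dv_26_5] at h
  exact h

lemma dv_27_5 : d 27 5 = 94002200370 := by
  have h := d_rec 26 4
  norm_num [dv_26_4, dv_26_5, dv_26_6] at h
  exact h

lemma dv_27_6 : d 27 6 = 80464048470 := by
  have h := d_rec 26 5
  norm_num [dv_26_5, dv_26_6, dv_26_7] at h
  exact h

lemma dv_27_7 : d 27 7 = 63570677040 := by
  have h := d_rec 26 6
  norm_num [dv_26_6, dv_26_7, dv_26_8] at h
  exact h

lemma dv_27_8 : d 27 8 = 46579290420 := by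
  have h := d_rec 26 7
  norm_num [dv_26_7, dv_26_8, dv_26_9] at h
  exact h

lemma dv_27_9 : d 27 9 = 31733895570 := by
  have h := d_rec 26 8
  norm_num [dv_26_8, dv_26_9, dv_26_10] at h
  exact h

lemma dv_28_0 : d 28 0 = 54022715451 := by
  have h := d_zero 27
  norm_num [dv_27_1] at h
  exact h

lemma dv_28_1 : d 28 1 = 154000562758 := by
  have h := d_rec 27 0
  norm_num [dv_27_0, dv_27_1, dv_27_2] at h
  exact h

lemma dv_28_2 : d 28 2 = 231718943862 := by
  have h := d_rec 27 1
  norm_num [dv_27_1, dv_27_2, dv_27_3] at h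
  exact h

lemma dv_28_3 : d 28 3 = 278180957691 := by
  have h := d_rec 27 2
  norm_num [dv_27_2, dv_27_3, dv_27_4] at h
  exact h

lemma dv_28_4 : d 28 4 = 291190368105 := by
  have h := d_rec 27 3
  norm_num [dv_27_3, dv_27_4, dv_27_5] at h
  exact h

lemma dv_28_5 : d 28 5 = 274950978120 := by
  have h := d_rec 27 4
  norm_num [dv_27_4, dv_27_5, dv_27_6] at h
  exact h

lemma dv_28_6 : d 28 6 = 238036925880 := by
  have h := d_rec 27 5
  norm_num [dv_27_5, dv_27_6, dv_27_7] at h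
  exact h

lemma dv_28_7 : d 28 7 = 190614015930 := by
  have h := d_rec 27 6
  norm_num [dv_27_6, dv_27_7, dv_27_8] at h
  exact h

lemma dv_28_8 : d 28 8 = 141883863030 := by
  have h := d_rec 27 7
  norm_num [dv_27_7, dv_27_8, dv_27_9] at h
  exact h

lemma dv_29_0 : d 29 0 = 154000562758 := by
  have h := d_zero 28
  norm_num [dv_28_1] at h
  exact h

lemma dv_29_1 : d 29 1 = 439742222071 := by
  have h := d_rec 28 0
  norm_num [dv_28_0, dv_28_1, dv_28_2] at h
  exact h

lemma dv_29_2 : d 29 2 = 663900464311 := by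
  have h := d_rec 28 1
  norm_num [dv_28_1, dv_28_2, dv_28_3] at h
  exact h

lemma dv_29_3 : d 29 3 = 801090269658 := by
  have h := d_rec 28 2
  norm_num [dv_28_2, dv_28_3, dv_28_4] at h
  exact h

lemma dv_29_4 : d 29 4 = 844322303916 := by
  have h := d_rec 28 3
  norm_num [dv_28_3, dv_28_4, dv_28_5] at h
  exact h

lemma dv_29_5 : d 29 5 = 804178272105 := by
  have h := d_rec 28 4
  norm_num [dv_28_4, dv_28_5, dv_28_6] at h
  exact h

lemma dv_29_6 : d 29 6 = 703601919930 := by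
  have h := d_rec 28 5
  norm_num [dv_28_5, dv_28_6, dv_28_7] at h
  exact h

lemma dv_29_7 : d 29 7 = 570534804840 := by
  have h := d_rec 28 6
  norm_num [dv_28_6, dv_28_7, dv_28_8] at h
  exact h

lemma dv_30_0 : d 30 0 = 439742222071 := by
  have h := d_zero 29
  norm_num [dv_29_1] at h
  exact h

lemma dv_30_1 : d 30 1 = 1257643249140 := by
  have h := d_rec 29 0
  norm_num [dv_29_0, dv_29_1, dv_29_2] at h
  exact h

lemma dv_30_2 : d 30 2 = 1904732956040 := by
  have h := d_rec 29 1
  norm_num [dv_29_1, dv_29_2, dv_29_3] at h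
  exact h

lemma dv_30_3 : d 30 3 = 2309313037885 := by
  have h := d_rec 29 2
  norm_num [dv_29_2, dv_29_3, dv_29_4] at h
  exact h

lemma dv_30_4 : d 30 4 = 2449590845679 := by
  have h := d_rec 29 3
  norm_num [dv_29_3, dv_29_4, dv_29_5] at h
  exact h

lemma dv_30_5 : d 30 5 = 2352102495951 := by
  have h := d_rec 29 4
  norm_num [dv_29_4, dv_29_5, dv_29_6] at h
  exact h

lemma dv_30_6 : d 30 6 = 2078314996875 := by
  have h := d_rec 29 5
  norm_num [dv_29_5, dv_29_6, dv_29_7] at h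
  exact h

lemma dv_31_0 : d 31 0 = 1257643249140 := by
  have h := d_zero 30
  norm_num [dv_30_1] at h
  exact h

lemma dv_31_1 : d 31 1 = 3602118427251 := by
  have h := d_rec 30 0
  norm_num [dv_30_0, dv_30_1, dv_30_2] at h
  exact h

lemma dv_31_2 : d 31 2 = 5471689243065 := by
  have h := d_rec 30 1
  norm_num [dv_30_1, dv_30_2, dv_30_3] at h
  exact h

lemma dv_31_3 : d 31 3 = 6663636839604 := by
  have h := d_rec 30 2
  norm_num [dv_30_2, dv_30_3, dv_30_4] at h
  exact h

lemma dv_31_4 : d 31 4 = 7111006379515 := by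
  have h := d_rec 30 3
  norm_num [dv_30_3, dv_30_4, dv_30_5] at h
  exact h

lemma dv_31_5 : d 31 5 = 6880008338505 := by
  have h := d_rec 30 4
  norm_num [dv_30_4, dv_30_5, dv_30_6] at h
  exact h


lemma grow : ∀ m : ℕ,
    8^m * 3283013545839 ≤ 3^m * d (31+m) 1 ∧
    8^m * 5471689243065 ≤ 3^m * d (31+m) 2 ∧
    8^m * 6566027091678 ≤ 3^m * d (31+m) 3 ∧
    8^m * 5471689243065 ≤ 3^m * d (31+m) 4 ∧
    8^m * 3283013545839 ≤ 3^m * d (31+m) 5 := by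
  intro m
  induction m with
  | zero => norm_num [dv_31_1, dv_31_2, dv_31_3, dv_31_4, dv_31_5]
  | succ m ih =>
    obtain ⟨h1, h2, h3, h4, h5⟩ := ih
    have e : 31 + (m+1) = (31+m) + 1 := by ring
    have r1 : d ((31+m)+1) 1 = d (31+m) 0 + d (31+m) 1 + d (31+m) 2 := by
      simpa using d_rec (31+m) 0
    have r2 : d ((31+m)+1) 2 = d (31+m) 1 + d (31+m) 2 + d (31+m) 3 := by
      simpa using d_rec (31+m) 1
    have r3 : d ((31+m)+1) 3 = d (31+m) 2 + d (31+m) 3 + d (31+m) 4 := by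
      simpa using d_rec (31+m) 2
    have r4 : d ((31+m)+1) 4 = d (31+m) 3 + d (31+m) 4 + d (31+m) 5 := by
      simpa using d_rec (31+m) 3
    have r5 : d ((31+m)+1) 5 = d (31+m) 4 + d (31+m) 5 + d (31+m) 6 := by
      simpa using d_rec (31+m) 4
    have hp : (0:ℤ) < 3^m := by positivity
    have h0 : 0 ≤ d (31+m) 0 := d_nonneg _ _
    have h6 : 0 ≤ d (31+m) 6 := d_nonneg _ _
    have m0 : 0 ≤ 3^m * d (31+m) 0 := mul_nonneg hp.le h0
    have m6 : 0 ≤ 3^m * d (31+m) 6 := mul_nonneg hp.le h6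
    have hb : (0:ℤ) ≤ 8^m := by positivity
    rw [e, pow_succ, pow_succ, r1, r2, r3, r4, r5]
    refine ⟨by nlinarith [hb], by nlinarith [hb], by nlinarith [hb], by nlinarith [hb], by nlinarith [hb]⟩

lemma fib_pow : ∀ m : ℕ, 3^m * Nat.fib (2*(31+m)+1) ≤ 8^m * Nat.fib 63 := by
  intro m
  induction m with
  | zero => norm_num
  | succ m ih =>
    have hs : 3 * Nat.fib ((60+2*m)+5) ≤ 8 * Nat.fib ((60+2*m)+3) := fib_step (60+2*m)
    have e1 : 2*(31+(m+1))+1 = (60+2*m)+5 := by ring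
    have e2 : 2*(31+m)+1 = (60+2*m)+3 := by ring
    rw [e2] at ih
    calc 3^(m+1) * Nat.fib (2*(31+(m+1))+1)
        = 3^m * (3 * Nat.fib ((60+2*m)+5)) := by rw [e1, pow_succ]; ring
      _ ≤ 3^m * (8 * Nat.fib ((60+2*m)+3)) := Nat.mul_le_mul_left _ hs
      _ = 8 * (3^m * Nat.fib ((60+2*m)+3)) := by ring
      _ ≤ 8 * (8^m * Nat.fib 63) := Nat.mul_le_mul_left _ ih
      _ = 8^(m+1) * Nat.fib 63 := by rw [pow_succ]; ring

lemma lhs_eq (n : ℕ) : 3 * trinom (n+1) 0 - trinom (n+2) 0 = 2 * d n 1 := by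
  rw [trinom_eq_tri, trinom_eq_tri]
  have h2 : tri (n+2) 0 = tri (n+1) (0-1) + tri (n+1) 0 + tri (n+1) (0+1) := rfl
  have hneg : tri (n+1) ((0:ℤ)-1) = tri (n+1) 1 := by
    rw [show ((0:ℤ)-1) = -(1:ℤ) by ring, tri_neg]
  have hd := d_zero n
  unfold d at hd
  push_cast at hd
  rw [h2, hneg]
  have : tri (n+1) (0:ℤ) - tri (n+1) (0+1:ℤ) = d n 1 := by
    simpa [d] using hd
  push_cast at this ⊢
  linarith [this]


/-- Euler's putative identity fails for all sufficiently large `n`; in particular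
the set of `n` for which it holds is finite. -/
theorem euler_identity_eventually_fails :
    (∃ N : ℕ, ∀ n : ℕ, N ≤ n →
      3 * trinom (n + 1) 0 - trinom (n + 2) 0 ≠ (Nat.fib n : ℤ) * ((Nat.fib n : ℤ) + 1)) ∧
    {n : ℕ |
      3 * trinom (n + 1) 0 - trinom (n + 2) 0 = (Nat.fib n : ℤ) * ((Nat.fib n : ℤ) + 1)}.Finite := by
  have key : ∀ n : ℕ, 31 ≤ n →
      (Nat.fib n : ℤ) * ((Nat.fib n : ℤ) + 1) < 3 * trinom (n+1) 0 - trinom (n+2) 0 := by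
    intro n hn
    obtain ⟨m, rfl⟩ := Nat.exists_eq_add_of_le hn
    rw [lhs_eq]
    have h1 := (grow m).1
    have hf := fib_pow m
    have hr := fib_rhs_le (31+m)
    have hf63 : Nat.fib 63 = 6557470319842 := by norm_num
    rw [hf63] at hf
    set F : ℤ := (Nat.fib (31+m) : ℤ) with hF
    have hpos : (0:ℤ) < 3^m := by positivity
    have hbpos : (0:ℤ) < 8^m := by positivity
    have s1 : F * (F + 1) ≤ (Nat.fib (2*(31+m)+1) : ℤ) := by
      have := hr
      push_cast [hF]
      exact_mod_cast hr
    have s2 : (3:ℤ)^m * (Nat.fib (2*(31+m)+1) : ℤ) ≤ 8^m * 6557470319842 := by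
      exact_mod_cast hf
    have : (3:ℤ)^m * (F * (F+1)) < 3^m * (2 * d (31+m) 1) := by
      have t1 : (3:ℤ)^m * (F * (F+1)) ≤ 3^m * (Nat.fib (2*(31+m)+1) : ℤ) :=
        mul_le_mul_of_nonneg_left s1 hpos.le
      have t2 : (8:ℤ)^m * 6557470319842 < 8^m * 6566027091678 := by
        have : (6557470319842:ℤ) < 6566027091678 := by norm_num
        exact mul_lt_mul_of_pos_left this hbpos
      nlinarith [h1]
    exact lt_of_mul_lt_mul_left this hpos.le
  constructor
  · exact ⟨31, fun n hn => (key n hn).ne'⟩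
  · apply Set.Finite.subset (Set.finite_Iio 31)
    intro n hn
    simp only [Set.mem_setOf_eq] at hn
    by_contra hc
    simp only [Set.mem_Iio, not_lt] at hc
    exact absurd hn (key n hc).ne'
end

section
/- Let P be a Laurent polynomial with integer coefficients, let k ≥ 1 be an integer, and for each residue a with 0 ≤ a < k define A(n, k, a) := Σ_{j∈ℤ} [coefficient of x^(kj+a) in Pⁿ]. Then there exist integers d₁, d₂, …, d_k (independent of a) such that for every residue a with 0 ≤ a < k and every natural number n, A(n+k, k, a) = Σ_{i=1}^{k} dᵢ · A(n+k−i, k, a). In other words, the k sequences (A(n, k, a))_{n≥0} all satisfy one and the same homogeneous linear recurrence with constant coefficients of order k. -/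
open LaurentPolynomial

/-- The generalized Euler–Andrews sum `A(n, k, a) = Σ_{j∈ℤ} [coefficient of x^(kj+a) in Pⁿ]`,
where the coefficients are taken in the ring of Laurent polynomials `ℤ[T;T⁻¹]`. -/
noncomputable def genA (P : ℤ[T;T⁻¹]) (k : ℕ) (n : ℕ) (a : ℤ) : ℤ :=
  ∑ᶠ j : ℤ, (P ^ n).coeff ((k : ℤ) * j + a)

open Polynomial Module Finset

/-- Reduction of a Laurent polynomial modulo `x^k - 1`, as an element of the group
algebra of `ZMod k`. -/
noncomputable def resMap (k : ℕ) : ℤ[T;T⁻¹] →+* AddMonoidAlgebra ℤ (ZMod k) :=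
  AddMonoidAlgebra.mapDomainRingHom ℤ (Int.castAddHom (ZMod k))

lemma finsum_eq_resMap {k : ℕ} (hk : k ≠ 0) (F : ℤ[T;T⁻¹]) (a : ℤ) :
    (∑ᶠ j : ℤ, F.coeff ((k : ℤ) * j + a)) = (resMap k F).coeff ((a : ZMod k)) := by
  classical
  have hkz : (k : ℤ) ≠ 0 := by exact_mod_cast hk
  set e : ℤ → ℤ := fun j => (k : ℤ) * j + a with he
  have hinj : Function.Injective e := by
    intro x y h
    simp only [he] at h
    exact mul_left_cancel₀ hkz (by linarith)
  -- RHS as a sum over the support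
  have hrhs : (resMap k F).coeff ((a : ZMod k))
      = ∑ x ∈ F.coeff.support, if ((x : ZMod k) = (a : ZMod k)) then F.coeff x else 0 := by
    rw [resMap, AddMonoidAlgebra.mapDomainRingHom_apply]
    simp only [AddMonoidAlgebra.mapDomain, AddMonoidAlgebra.coeff_ofCoeff, ZeroHom.toFun_eq_coe, AddMonoidHom.toZeroHom_coe,
      Finsupp.mapDomain.addMonoidHom_apply, Finsupp.mapDomain, Finsupp.sum_apply, Finsupp.sum,
      Finsupp.finset_sum_apply, Finsupp.single_apply, Int.coe_castAddHom]
  -- LHS as a finite sum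
  have hsupp : (Function.support fun j : ℤ => F.coeff (e j))
      ⊆ ↑(F.coeff.support.preimage e hinj.injOn) := by
    intro j hj
    simp only [Function.mem_support] at hj
    simp [Finset.mem_preimage, Finsupp.mem_support_iff, hj]
  rw [finsum_eq_finset_sum_of_support_subset _ hsupp, hrhs, ← Finset.sum_filter]
  refine Finset.sum_bij (fun j _ => e j) ?_ ?_ ?_ ?_
  · intro j hj
    simp only [Finset.mem_preimage] at hj
    simp only [Finset.mem_filter]
    refine ⟨hj, ?_⟩
    have : ((k : ℤ) : ZMod k) = 0 := by
      simp [ZMod.natCast_self]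
    push_cast [he]
    simp [this]
  · intro x hx y hy h
    exact hinj h
  · intro x hx
    simp only [Finset.mem_filter] at hx
    obtain ⟨hx1, hx2⟩ := hx
    rw [eq_comm, ZMod.intCast_eq_intCast_iff_dvd_sub] at hx2
    obtain ⟨j, hj⟩ := hx2
    refine ⟨j, ?_, ?_⟩
    · simp only [Finset.mem_preimage, he]
      have : (k : ℤ) * j + a = x := by linarith
      rwa [this]
    · simp only [he]
      linarith
  · intro j hj; rfl

lemma pow_linear_rec {k : ℕ} (hk : 1 ≤ k) (Q : AddMonoidAlgebra ℤ (ZMod k)) :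
    ∃ d : Fin k → ℤ, ∀ n : ℕ,
      Q ^ (n + k) = ∑ i : Fin k, d i • Q ^ (n + k - ((i : ℕ) + 1)) := by
  classical
  haveI : NeZero k := ⟨by omega⟩
  have B : Basis (ZMod k) ℤ (AddMonoidAlgebra ℤ (ZMod k)) := AddMonoidAlgebra.basis (ZMod k) ℤ
  haveI : Module.Finite ℤ (AddMonoidAlgebra ℤ (ZMod k)) := Module.Finite.of_basis B
  haveI : Module.Free ℤ (AddMonoidAlgebra ℤ (ZMod k)) := Module.Free.of_basis B
  set f : Module.End ℤ (AddMonoidAlgebra ℤ (ZMod k)) :=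
    (Algebra.lmul ℤ (AddMonoidAlgebra ℤ (ZMod k))) Q with hf
  set p : ℤ[X] := LinearMap.charpoly f with hp
  have hdeg : p.natDegree = k := by
    rw [hp, LinearMap.charpoly_natDegree, finrank_eq_card_basis B, ZMod.card]
  have haeval : aeval Q p = 0 := by
    have h := LinearMap.aeval_self_charpoly f
    rw [hf, Polynomial.aeval_algHom_apply] at h
    have h2 := congrArg (fun g : Module.End ℤ (AddMonoidAlgebra ℤ (ZMod k)) => g 1) h
    simpa [hp, hf] using h2
  have hsum : ∑ i ∈ range (k + 1), p.coeff i • Q ^ i = 0 := by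
    have h2 := (Polynomial.aeval_eq_sum_range' (p := p) (n := k + 1) (by omega) Q).symm
    rw [haeval] at h2
    exact h2
  have htop : p.coeff k = 1 := by
    rw [← hdeg]; exact (LinearMap.charpoly_monic f).coeff_natDegree
  have hQk : Q ^ k = -∑ i ∈ range k, p.coeff i • Q ^ i := by
    rw [Finset.sum_range_succ, htop, one_smul] at hsum
    exact eq_neg_of_add_eq_zero_right hsum
  refine ⟨fun i => -p.coeff (k - ((i : ℕ) + 1)), fun n => ?_⟩
  calc Q ^ (n + k) = Q ^ n * Q ^ k := by rw [pow_add]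
    _ = -∑ i ∈ range k, p.coeff i • Q ^ (n + i) := by
        rw [hQk, mul_neg, Finset.mul_sum]
        congr 1
        exact Finset.sum_congr rfl fun i _ => by rw [mul_smul_comm, ← pow_add]
    _ = ∑ i ∈ range k, -(p.coeff (k - 1 - i) • Q ^ (n + (k - 1 - i))) := by
        rw [← Finset.sum_neg_distrib,
          ← Finset.sum_range_reflect (fun i => -(p.coeff i • Q ^ (n + i))) k]
    _ = ∑ i : Fin k, -p.coeff (k - ((i : ℕ) + 1)) • Q ^ (n + k - ((i : ℕ) + 1)) := by
        rw [Fin.sum_univ_eq_sum_range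
          (fun i => -p.coeff (k - (i + 1)) • Q ^ (n + k - (i + 1)))]
        refine Finset.sum_congr rfl fun i hi => ?_
        simp only [Finset.mem_range] at hi
        have h1 : k - (i + 1) = k - 1 - i := by omega
        have h2 : n + k - (i + 1) = n + (k - 1 - i) := by omega
        rw [h1, h2, neg_smul]

/-- The `k` sequences `n ↦ A(n, k, a)` all satisfy one and the same homogeneous linear
recurrence with constant coefficients of order `k`. -/
theorem genA_cfinite (P : ℤ[T;T⁻¹]) (k : ℕ) (hk : 1 ≤ k) :
    ∃ d : Fin k → ℤ, ∀ a : ℤ, 0 ≤ a → a < (k : ℤ) → ∀ n : ℕ,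
      genA P k (n + k) a = ∑ i : Fin k, d i * genA P k (n + k - ((i : ℕ) + 1)) a := by
  have hk0 : k ≠ 0 := by omega
  obtain ⟨d, hd⟩ := pow_linear_rec hk (resMap k P)
  refine ⟨d, fun a _ _ n => ?_⟩
  have key : ∀ m : ℕ, genA P k m a = ((resMap k P) ^ m).coeff ((a : ZMod k)) := by
    intro m
    rw [genA, finsum_eq_resMap hk0, map_pow]
  rw [key, hd n]
  rw [AddMonoidAlgebra.coeff_sum, Finsupp.finset_sum_apply]
  refine Finset.sum_congr rfl fun i _ => ?_
  rw [key, AddMonoidAlgebra.coeff_smul_apply, smul_eq_mul]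
end

section
/- The ratio of consecutive central trinomial coefficients tends to 3: if Tₙ := C(n, 0)₂ denotes the central trinomial coefficient, then Tₙ > 0 for all n and the sequence of real numbers Tₙ₊₁ / Tₙ converges to 3 as n → ∞. -/
open LaurentPolynomial

open Polynomial Finset Filter

lemma trinom_zero (j : ℤ) : trinom 0 j = if 0 = j then 1 else 0 := by
  rw [trinom, pow_zero, ← single_zero_one_eq_one]
  exact Finsupp.single_apply


lemma LP.add_apply (f g : ℤ[T;T⁻¹]) (y : ℤ) : (f + g).coeff y = f.coeff y + g.coeff y := rfl


lemma mulT_apply (f : ℤ[T;T⁻¹]) (m : ℤ) (y : ℤ) : (f * (T m : ℤ[T;T⁻¹])).coeff y = f.coeff (y - m) := by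
  have := AddMonoidAlgebra.coeff_mul_single_apply (R := ℤ) (G := ℤ) f 1 m y
  rw [mul_one] at this
  exact this


lemma trinom_succ (n : ℕ) (j : ℤ) :
    trinom (n + 1) j = trinom n (j + 1) + trinom n j + trinom n (j - 1) := by
  have h : ((T (-1) + 1 + T 1 : ℤ[T;T⁻¹])) ^ (n + 1)
      = (T (-1) + 1 + T 1) ^ n * T (-1) + (T (-1) + 1 + T 1) ^ n
        + (T (-1) + 1 + T 1) ^ n * T 1 := by ring
  have h2 := congrArg (fun f : ℤ[T;T⁻¹] => f.coeff j) h
  simp only [LP.add_apply, mulT_apply, sub_neg_eq_add] at h2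
  simp only [trinom]
  exact h2

lemma trinom_nonneg (n : ℕ) (j : ℤ) : 0 ≤ trinom n j := by
  induction n generalizing j with
  | zero => rw [trinom_zero]; split <;> norm_num
  | succ n ih => rw [trinom_succ]; have := ih (j+1); have := ih j; have := ih (j-1); omega


lemma trinom_symm (n : ℕ) (j : ℤ) : trinom n (-j) = trinom n j := by
  induction n generalizing j with
  | zero => rw [trinom_zero, trinom_zero]; simp [eq_comm, neg_eq_zero]
  | succ n ih =>
      rw [trinom_succ, trinom_succ]
      have h1 : -j + 1 = -(j - 1) := by ring
      have h2 : -j - 1 = -(j + 1) := by ring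
      rw [h1, h2, ih, ih, ih]; ring


lemma trinom_anti (n : ℕ) (j : ℤ) (hj : 0 ≤ j) : trinom n (j + 1) ≤ trinom n j := by
  induction n generalizing j with
  | zero =>
      rw [trinom_zero, trinom_zero]
      have : ¬ (0 = j + 1) := by omega
      simp [this]; split <;> norm_num
  | succ n ih =>
      rw [trinom_succ, trinom_succ]
      rcases eq_or_lt_of_le hj with h | h
      · subst h
        have e1 : (0:ℤ) + 1 + 1 = 1 + 1 := by norm_num
        have e2 : (0:ℤ) + 1 - 1 = 0 := by norm_num
        have e3 : (0:ℤ) - 1 = -1 := by norm_num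
        have e4 : (0:ℤ) + 1 = 1 := by norm_num
        rw [e1, e2, e3, e4, trinom_symm n 1]
        have h2 := ih 1 (by norm_num)
        have h3 : (1:ℤ) + 1 = 2 := by norm_num
        rw [h3] at h2 ⊢
        omega
      · have h1 := ih (j - 1) (by omega)
        have h2 := ih j hj
        have h3 := ih (j + 1) (by omega)
        have e1 : j - 1 + 1 = j := by ring
        have e2 : j + 1 + 1 = j + 1 + 1 := rfl
        rw [e1] at h1
        have e3 : j + 1 - 1 = j := by ring
        rw [e3]
        omega


lemma trinom_pos (n : ℕ) : 0 < trinom n 0 := by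
  induction n with
  | zero => rw [trinom_zero]; norm_num
  | succ n ih =>
      rw [trinom_succ]
      have := trinom_nonneg n (0+1)
      have := trinom_nonneg n (0-1)
      omega


lemma T_succ (n : ℕ) : trinom (n+1) 0 = trinom n 0 + 2 * trinom n 1 := by
  rw [trinom_succ]
  have : (0:ℤ) - 1 = -1 := by ring
  rw [this, trinom_symm n 1]; ring_nf


lemma T_mono (n : ℕ) : trinom n 0 ≤ trinom (n+1) 0 := by
  rw [T_succ]; have := trinom_nonneg n 1; omega


lemma T_le (n : ℕ) : trinom (n+1) 0 ≤ 3 * trinom n 0 := by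
  rw [T_succ]
  have := trinom_anti n 0 le_rfl
  rw [zero_add] at this
  omega

noncomputable def qp : Polynomial ℤ := 1 + X + X ^ 2


lemma laurent_eq : (T (-1) + 1 + T 1 : ℤ[T;T⁻¹]) = T (-1) * Polynomial.toLaurent qp := by
  rw [qp]
  simp only [map_add, Polynomial.toLaurent_one, Polynomial.toLaurent_X_pow, Polynomial.toLaurent_X]
  rw [mul_add, mul_add, mul_one, ← T_add, ← T_add]
  norm_num


lemma singleT_mul_apply (m : ℤ) (f : ℤ[T;T⁻¹]) (y : ℤ) : ((T m : ℤ[T;T⁻¹]) * f).coeff y = f.coeff (-m + y) := by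
  have := AddMonoidAlgebra.coeff_single_mul_apply (R := ℤ) (G := ℤ) f 1 m y
  rw [one_mul] at this
  exact this


lemma toLaurent_coeff (p : Polynomial ℤ) (k : ℕ) :
    (Polynomial.toLaurent p).coeff (k : ℤ) = p.coeff k := by
  rw [coeff_toLaurent]
  exact Finsupp.mapDomain_apply Nat.castEmbedding.injective _ k


lemma trinom_coeff (n k : ℕ) : trinom n ((k : ℤ) - n) = (qp ^ n).coeff k := by
  rw [trinom, laurent_eq, mul_pow, T_pow, ← map_pow]
  have h := singleT_mul_apply (n * (-1)) (Polynomial.toLaurent (qp ^ n)) ((k : ℤ) - n)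
  rw [h]
  have e : -((n:ℤ) * (-1)) + ((k:ℤ) - n) = (k : ℤ) := by ring
  rw [e, toLaurent_coeff]

lemma qp_natDegree_pow (n : ℕ) : (qp ^ n).natDegree ≤ 2 * n := by
  refine le_trans (natDegree_pow_le) ?_
  have : qp.natDegree ≤ 2 := by
    rw [qp]; compute_degree
  nlinarith


lemma c_nonneg (n k : ℕ) : 0 ≤ (qp ^ n).coeff k := by
  rw [← trinom_coeff]; exact trinom_nonneg _ _


lemma c_symm (n k : ℕ) (hk : k ≤ 2 * n) : (qp ^ n).coeff k = (qp ^ n).coeff (2 * n - k) := by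
  rw [← trinom_coeff, ← trinom_coeff]
  have e : ((2 * n - k : ℕ) : ℤ) - n = -((k : ℤ) - n) := by
    have : ((2 * n - k : ℕ) : ℤ) = 2 * n - k := by
      omega
    rw [this]; ring
  rw [e, trinom_symm]


lemma c_zero (n k : ℕ) (hk : 2 * n < k) : (qp ^ n).coeff k = 0 :=
  coeff_eq_zero_of_natDegree_lt (lt_of_le_of_lt (qp_natDegree_pow n) hk)


lemma c_sum (n : ℕ) : ∑ k ∈ range (2 * n + 1), (qp ^ n).coeff k = 3 ^ n := by
  have hd : (qp ^ n).natDegree < 2 * n + 1 := Nat.lt_succ_of_le (qp_natDegree_pow n)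
  have := eval_eq_sum_range' hd (1 : ℤ)
  simp only [one_pow, mul_one] at this
  rw [← this, eval_pow]
  have : qp.eval 1 = 3 := by rw [qp]; simp
  rw [this]


lemma conv (p q : ℕ) (m : ℕ) :
    (qp ^ (p + q)).coeff m = ∑ k ∈ range (m + 1), (qp ^ p).coeff k * (qp ^ q).coeff (m - k) := by
  rw [pow_add, coeff_mul, Finset.Nat.sum_antidiagonal_eq_sum_range_succ_mk]


lemma Tsq (m : ℕ) : trinom (2 * m) 0 = ∑ k ∈ range (2 * m + 1), (qp ^ m).coeff k ^ 2 := by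
  have h0 : trinom (2 * m) 0 = (qp ^ (2 * m)).coeff (2 * m) := by
    have := trinom_coeff (2 * m) (2 * m)
    simpa using this
  rw [h0, show 2 * m = m + m from by ring, conv m m]
  refine Finset.sum_congr rfl fun k hk => ?_
  rw [mem_range] at hk
  have h1 := c_symm m (m + m - k) (by omega)
  rw [show 2 * m - (m + m - k) = k from by omega] at h1
  rw [h1]; ring

lemma nine_le (m : ℕ) : (9 : ℤ) ^ m ≤ (2 * m + 1) * trinom (2 * m) 0 := by
  have cs := Finset.sum_mul_sq_le_sq_mul_sq (range (2 * m + 1))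
    (fun k => (qp ^ m).coeff k) (fun _ => (1 : ℤ))
  simp only [mul_one, one_pow] at cs
  rw [c_sum, Finset.sum_const, card_range, nsmul_eq_mul, mul_one] at cs
  rw [Tsq]
  calc (9 : ℤ) ^ m = (3 ^ m) ^ 2 := by rw [← pow_mul, pow_mul']; norm_num
    _ ≤ _ := by
        refine le_trans cs ?_
        rw [mul_comm]
        push_cast
        exact le_refl _


lemma logconv (m : ℕ) : trinom (2 * m + 2) 0 ^ 2 ≤ trinom (2 * m) 0 * trinom (2 * m + 4) 0 := by
  -- T_{2m+2} as a convolution sum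
  have h0 : trinom (2 * m + 2) 0 = (qp ^ (2 * m + 2)).coeff (2 * m + 2) := by
    have := trinom_coeff (2 * m + 2) (2 * m + 2)
    simpa using this
  have h1 : trinom (2 * m + 2) 0
      = ∑ k ∈ range (2 * m + 3), (qp ^ m).coeff k * (qp ^ (m + 2)).coeff (k + 2) := by
    rw [h0, show 2 * m + 2 = m + (m + 2) from by ring, conv m (m + 2)]
    refine Finset.sum_congr (by congr 1; omega) fun k hk => ?_
    rw [mem_range] at hk
    congr 1
    have h2 := c_symm (m + 2) (m + (m + 2) - k) (by omega)
    rw [show 2 * (m + 2) - (m + (m + 2) - k) = k + 2 from by omega] at h2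
    exact h2
  have cs := Finset.sum_mul_sq_le_sq_mul_sq (range (2 * m + 3))
    (fun k => (qp ^ m).coeff k) (fun k => (qp ^ (m + 2)).coeff (k + 2))
  rw [← h1] at cs
  have e1 : ∑ k ∈ range (2 * m + 3), (qp ^ m).coeff k ^ 2 = trinom (2 * m) 0 := by
    rw [Tsq]
    rw [show 2 * m + 3 = (2 * m + 1) + 1 + 1 from by ring, Finset.sum_range_succ,
      Finset.sum_range_succ, c_zero m (2 * m + 1) (by omega), c_zero m (2 * m + 2) (by omega)]
    ring
  have e2 : ∑ k ∈ range (2 * m + 3), (qp ^ (m + 2)).coeff (k + 2) ^ 2 ≤ trinom (2 * m + 4) 0 := by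
    have h4 : trinom (2 * m + 4) 0 = ∑ k ∈ range (2 * m + 5), (qp ^ (m + 2)).coeff k ^ 2 := by
      have h5 := Tsq (m + 2)
      rw [show 2 * (m + 2) = 2 * m + 4 from by ring] at h5
      rw [h5]
    have expand : ∑ k ∈ range (2 * m + 5), (qp ^ (m + 2)).coeff k ^ 2
        = (∑ k ∈ range (2 * m + 3), (qp ^ (m + 2)).coeff (k + 1 + 1) ^ 2
            + (qp ^ (m + 2)).coeff (0 + 1) ^ 2) + (qp ^ (m + 2)).coeff 0 ^ 2 := by
      rw [show 2 * m + 5 = (2 * m + 4) + 1 from by omega, Finset.sum_range_succ',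
        show 2 * m + 4 = (2 * m + 3) + 1 from by omega, Finset.sum_range_succ']
    have e3 : ∀ k : ℕ, (qp ^ (m + 2)).coeff (k + 1 + 1) ^ 2 = (qp ^ (m + 2)).coeff (k + 2) ^ 2 := by
      intro k
      congr 2
    simp only [e3] at expand
    rw [h4, expand]
    nlinarith [sq_nonneg ((qp ^ (m + 2)).coeff (0 + 1)), sq_nonneg ((qp ^ (m + 2)).coeff 0)]
  calc trinom (2 * m + 2) 0 ^ 2
      ≤ (∑ k ∈ range (2 * m + 3), (qp ^ m).coeff k ^ 2) *
        (∑ k ∈ range (2 * m + 3), (qp ^ (m + 2)).coeff (k + 2) ^ 2) := cs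
    _ ≤ trinom (2 * m) 0 * trinom (2 * m + 4) 0 := by
        rw [e1]
        refine mul_le_mul_of_nonneg_left e2 ?_
        rw [Tsq]
        exact Finset.sum_nonneg fun k _ => sq_nonneg _

noncomputable def Tr (n : ℕ) : ℝ := (trinom n 0 : ℝ)

noncomputable def sq' (k : ℕ) : ℝ := Tr (2 * k + 2) / Tr (2 * k)


lemma Tr_pos (n : ℕ) : 0 < Tr n := by
  rw [Tr]; exact_mod_cast trinom_pos n


lemma Tr_mono (n : ℕ) : Tr n ≤ Tr (n + 1) := by
  rw [Tr, Tr]; exact_mod_cast T_mono n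


lemma Tr_le3 (n : ℕ) : Tr (n + 1) ≤ 3 * Tr n := by
  have := T_le n
  have : ((trinom (n+1) 0 : ℤ) : ℝ) ≤ ((3 * trinom n 0 : ℤ) : ℝ) := by exact_mod_cast this
  simpa [Tr] using this


lemma sq'_mono : Monotone sq' := by
  apply monotone_nat_of_le_succ
  intro k
  rw [sq', sq', show 2 * (k + 1) + 2 = 2 * k + 4 from by ring, show 2 * (k + 1) = 2 * k + 2 from by ring]
  rw [div_le_div_iff₀ (Tr_pos _) (Tr_pos _)]
  have := logconv k
  have h : (Tr (2 * k + 2)) ^ 2 ≤ Tr (2 * k) * Tr (2 * k + 4) := by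
    have := logconv k
    have h2 : ((trinom (2*k+2) 0 ^ 2 : ℤ) : ℝ) ≤ ((trinom (2*k) 0 * trinom (2*k+4) 0 : ℤ) : ℝ) := by
      exact_mod_cast this
    simpa [Tr] using h2
  nlinarith [Tr_pos (2*k), Tr_pos (2*k+2), Tr_pos (2*k+4)]


lemma sq'_le9 (k : ℕ) : sq' k ≤ 9 := by
  rw [sq', div_le_iff₀ (Tr_pos _)]
  have h1 := Tr_le3 (2 * k + 1)
  have h2 := Tr_le3 (2 * k)
  calc Tr (2 * k + 2) = Tr (2 * k + 1 + 1) := by norm_num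
    _ ≤ 3 * Tr (2 * k + 1) := Tr_le3 _
    _ ≤ 3 * (3 * Tr (2 * k)) := by nlinarith [Tr_pos (2*k+1)]
    _ = 9 * Tr (2 * k) := by ring


lemma sq'_ge1 (k : ℕ) : 1 ≤ sq' k := by
  rw [sq', le_div_iff₀ (Tr_pos _), one_mul]
  calc Tr (2 * k) ≤ Tr (2 * k + 1) := Tr_mono _
    _ ≤ Tr (2 * k + 2) := Tr_mono _


noncomputable def Lsup : ℝ := ⨆ k, sq' k


lemma sq'_bdd : BddAbove (Set.range sq') := ⟨9, by rintro x ⟨k, rfl⟩; exact sq'_le9 k⟩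


lemma sq'_le_L (k : ℕ) : sq' k ≤ Lsup := le_ciSup sq'_bdd k


lemma L_le9 : Lsup ≤ 9 := ciSup_le sq'_le9


lemma L_pos : 1 ≤ Lsup := le_trans (sq'_ge1 0) (sq'_le_L 0)


lemma Tr_zero : Tr 0 = 1 := by
  have := trinom_zero 0
  simp at this
  simp [Tr, this]


lemma Tr_le_Lpow (k : ℕ) : Tr (2 * k) ≤ Lsup ^ k := by
  induction k with
  | zero => simp [Tr_zero]
  | succ k ih =>
      have e : 2 * (k + 1) = 2 * k + 2 := by ring
      rw [e, pow_succ]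
      have h1 : Tr (2 * k + 2) = sq' k * Tr (2 * k) := by
        rw [sq', div_mul_cancel₀]; exact ne_of_gt (Tr_pos _)
      rw [h1]
      have := sq'_le_L k
      have hL : 0 < Lsup := lt_of_lt_of_le one_pos L_pos
      calc sq' k * Tr (2 * k) ≤ Lsup * Tr (2 * k) :=
            mul_le_mul_of_nonneg_right (sq'_le_L k) (le_of_lt (Tr_pos _))
        _ ≤ Lsup * Lsup ^ k := mul_le_mul_of_nonneg_left ih (le_of_lt hL)
        _ = Lsup ^ k * Lsup := by ring


lemma nine_le_R (k : ℕ) : (9 : ℝ) ^ k ≤ (2 * k + 1) * Tr (2 * k) := by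
  have := nine_le k
  have h : ((9 ^ k : ℤ) : ℝ) ≤ (((2 * k + 1 : ℤ) * trinom (2 * k) 0 : ℤ) : ℝ) := by exact_mod_cast this
  push_cast at h
  simpa [Tr] using h


lemma L_eq9 : Lsup = 9 := by
  refine le_antisymm L_le9 ?_
  by_contra hlt
  push_neg at hlt
  set r : ℝ := Lsup / 9 with hr
  have hL0 : (0:ℝ) ≤ Lsup := le_trans zero_le_one L_pos
  have hr0 : 0 ≤ r := by rw [hr]; positivity
  have hr1 : r < 1 := by rw [hr, div_lt_one (by norm_num : (0:ℝ) < 9)]; exact hlt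
  have key : ∀ k : ℕ, (1 : ℝ) ≤ (2 * k + 1) * r ^ k := by
    intro k
    have h1 := nine_le_R k
    have h2 := Tr_le_Lpow k
    have h9 : (0:ℝ) < 9 ^ k := by positivity
    have : (9:ℝ) ^ k ≤ (2 * k + 1) * Lsup ^ k := by
      calc (9:ℝ)^k ≤ (2*k+1) * Tr (2*k) := h1
        _ ≤ (2*k+1) * Lsup ^ k := by
            refine mul_le_mul_of_nonneg_left h2 (by positivity)
    have hrpow : r ^ k = Lsup ^ k / 9 ^ k := by rw [hr, div_pow]
    have h4 : (1:ℝ) ≤ ((2 * k + 1) * Lsup ^ k) / 9 ^ k := (one_le_div h9).mpr this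
    rw [mul_div_assoc] at h4
    rw [hrpow]
    exact h4
  have t1 : Tendsto (fun k : ℕ => 2 * ((k : ℝ) * r ^ k) + r ^ k) atTop (nhds (2 * 0 + 0)) :=
    ((tendsto_self_mul_const_pow_of_lt_one hr0 hr1).const_mul 2).add
      (tendsto_pow_atTop_nhds_zero_of_lt_one hr0 hr1)
  have t2 : Tendsto (fun k : ℕ => (2 * (k : ℝ) + 1) * r ^ k) atTop (nhds 0) := by
    have : (fun k : ℕ => (2 * (k : ℝ) + 1) * r ^ k)
        = fun k : ℕ => 2 * ((k : ℝ) * r ^ k) + r ^ k := by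
      funext k; ring
    rw [this]
    simpa using t1
  have h5 : (1:ℝ) ≤ 0 := ge_of_tendsto' t2 key
  linarith


lemma sq'_tendsto : Tendsto sq' atTop (nhds 9) := by
  have := tendsto_atTop_ciSup sq'_mono sq'_bdd
  rwa [show (⨆ k, sq' k) = 9 from L_eq9] at this
lemma ratio_upper (n : ℕ) : Tr (n + 1) / Tr n ≤ 3 := by
  rw [div_le_iff₀ (Tr_pos n)]
  calc Tr (n + 1) ≤ 3 * Tr n := Tr_le3 n
    _ = 3 * Tr n := rfl

lemma ratio_lower (n : ℕ) : sq' (n / 2) / 3 ≤ Tr (n + 1) / Tr n := by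
  obtain ⟨k, hk⟩ : ∃ k, n = 2 * k ∨ n = 2 * k + 1 := ⟨n / 2, by omega⟩
  have hk2 : n / 2 = k := by omega
  rw [hk2, sq']
  rcases hk with h | h
  · subst h
    rw [div_div]
    rw [div_le_div_iff₀ (by have := Tr_pos (2 * k); linarith) (Tr_pos _)]
    have h1 : Tr (2 * k + 2) ≤ 3 * Tr (2 * k + 1) := Tr_le3 _
    nlinarith [Tr_pos (2 * k), Tr_pos (2 * k + 1), Tr_pos (2 * k + 2)]
  · subst h
    rw [div_div]
    rw [div_le_div_iff₀ (by have := Tr_pos (2 * k); linarith) (Tr_pos _)]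
    have h1 : Tr (2 * k + 1) ≤ 3 * Tr (2 * k) := Tr_le3 _
    have e : 2 * k + 1 + 1 = 2 * k + 2 := by ring
    rw [e]
    nlinarith [Tr_pos (2 * k), Tr_pos (2 * k + 1), Tr_pos (2 * k + 2)]

lemma ratio_tendsto : Tendsto (fun n : ℕ => Tr (n + 1) / Tr n) atTop (nhds 3) := by
  have hdiv : Tendsto (fun n : ℕ => n / 2) atTop atTop :=
    tendsto_atTop_atTop.mpr fun b => ⟨2 * b, fun n hn => by omega⟩
  have hl : Tendsto (fun n : ℕ => sq' (n / 2) / 3) atTop (nhds 3) := by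
    have := (sq'_tendsto.comp hdiv).div_const 3
    norm_num at this
    exact this
  exact tendsto_of_tendsto_of_tendsto_of_le_of_le hl tendsto_const_nhds
    ratio_lower ratio_upper

/-- The central trinomial coefficients `Tₙ = C(n, 0)₂` are positive and the ratio of
consecutive central trinomial coefficients tends to `3`. -/
theorem central_trinomial_ratio_tendsto_three :
    (∀ n : ℕ, 0 < trinom n 0) ∧
    Filter.Tendsto (fun n : ℕ => (trinom (n + 1) 0 : ℝ) / (trinom n 0 : ℝ))
      Filter.atTop (nhds 3) := by
  exact ⟨trinom_pos, ratio_tendsto⟩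
end

section
/- The central trinomial coefficients Tₙ := C(n, 0)₂ satisfy the three-term linear recurrence with polynomial coefficients (n + 2)·Tₙ₊₂ = (2n + 3)·Tₙ₊₁ + 3(n + 1)·Tₙ for all natural numbers n. -/
open LaurentPolynomial

open Polynomial in
lemma trinom_eq (m : ℕ) : trinom m 0 = ((1 + X + X ^ 2 : ℤ[X]) ^ m).coeff m := by
  have h1 : (T (-1) + 1 + T 1 : ℤ[T;T⁻¹]) =
      Polynomial.toLaurent (1 + X + X ^ 2 : ℤ[X]) * T (-1) := by
    rw [map_add, map_add, Polynomial.toLaurent_one, map_pow, Polynomial.toLaurent_X,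
      add_mul, add_mul, T_pow, one_mul, ← T_add, ← T_add]
    norm_num
  have h2 : ((T (-1) + 1 + T 1 : ℤ[T;T⁻¹])) ^ m =
      Polynomial.toLaurent ((1 + X + X ^ 2 : ℤ[X]) ^ m) * T (-(m : ℤ)) := by
    rw [h1, mul_pow, map_pow, T_pow]
    norm_num
  rw [trinom, h2, T, AddMonoidAlgebra.coeff_mul_single_apply]
  rw [Polynomial.toLaurent_apply]
  simp only [zero_sub, neg_neg, mul_one]
  erw [Finsupp.mapDomain_apply (fun a b h => by exact_mod_cast h)]
  erw [zero_add]
  rfl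

open Polynomial in
lemma key (n : ℕ) :
    ((n : ℤ) + 2) * ((1 + X + X ^ 2 : ℤ[X]) ^ (n + 2)).coeff (n + 2) =
      (2 * (n : ℤ) + 3) * ((1 + X + X ^ 2 : ℤ[X]) ^ (n + 1)).coeff (n + 1)
      + 3 * ((n : ℤ) + 1) * ((1 + X + X ^ 2 : ℤ[X]) ^ n).coeff n := by
  set g : ℤ[X] := (1 - X ^ 2) * (1 + X + X ^ 2) ^ (n + 1) with hg
  have hid : X * derivative g + Polynomial.C ((n : ℤ) + 2) * (1 + X + X ^ 2) ^ (n + 2)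
      = Polynomial.C ((n : ℤ) + 2) * g + Polynomial.C (2 * (n : ℤ) + 3) * (X * (1 + X + X ^ 2) ^ (n + 1))
        + Polynomial.C (3 * ((n : ℤ) + 1)) * (X ^ 2 * (1 + X + X ^ 2) ^ n) := by
    have hd : derivative g = (-(2 : ℤ[X]) * X) * (1 + X + X ^ 2) ^ (n + 1)
        + (1 - X ^ 2) * (Polynomial.C ((n : ℤ) + 1) * (1 + X + X ^ 2) ^ n * (1 + 2 * X)) := by
      rw [hg, derivative_mul, derivative_pow]
      simp

    rw [hd]
    simp only [Polynomial.C_eq_intCast, map_add, map_mul, map_one, map_ofNat]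
    ring

  have h := congrArg (fun p : ℤ[X] => p.coeff (n + 2)) hid
  simp only [coeff_add, coeff_C_mul, coeff_X_mul, coeff_X_pow_mul, coeff_derivative] at h
  push_cast at h
  linarith

/-- The central trinomial coefficients satisfy the three-term recurrence with
polynomial coefficients `(n+2)·Tₙ₊₂ = (2n+3)·Tₙ₊₁ + 3(n+1)·Tₙ`. -/
theorem central_trinomial_recurrence (n : ℕ) :
    ((n : ℤ) + 2) * trinom (n + 2) 0 =
      (2 * (n : ℤ) + 3) * trinom (n + 1) 0 + 3 * ((n : ℤ) + 1) * trinom n 0 := by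
  rw [trinom_eq, trinom_eq, trinom_eq]
  exact key n
end

section
/- The sequence of central trinomial coefficients Tₙ := C(n, 0)₂ is not C-finite: there do not exist an integer k ≥ 1 and rational constants c₁, …, c_k such that Tₙ₊ₖ = c₁·Tₙ₊ₖ₋₁ + c₂·Tₙ₊ₖ₋₂ + … + c_k·Tₙ for all natural numbers n. -/
open LaurentPolynomial

section Aux

open Polynomial

/-- The polynomial `1 + X + X²`. -/
noncomputable def tq : ℤ[X] := 1 + X + X^2

/-- The central trinomial coefficients, as coefficients of `(1+X+X²)^n`. -/
noncomputable def aa (n : ℕ) : ℤ := (tq ^ n).coeff n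

lemma trinom_eq_aa (n : ℕ) : trinom n 0 = aa n := by
  have h1 : (T (-1) + 1 + T 1 : ℤ[T;T⁻¹]) = T (-1) * Polynomial.toLaurent tq := by
    rw [tq]
    simp only [map_add, map_one, map_pow, Polynomial.toLaurent_X]
    rw [show ((T 1:ℤ[T;T⁻¹]))^2 = T 2 by rw [T_pow]; norm_num]
    rw [mul_add, mul_add, mul_one, ← T_add, ← T_add]
    norm_num [T_zero]
  have h2 : ((T (-1) + 1 + T 1 : ℤ[T;T⁻¹]))^n = T (-(n:ℤ)) * Polynomial.toLaurent (tq^n) := by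
    rw [h1, mul_pow, map_pow, T_pow]
    norm_num
  have h3 : (T (-(n:ℤ)) * Polynomial.toLaurent (tq^n) : ℤ[T;T⁻¹]).coeff 0
      = (Polynomial.toLaurent (tq^n) : ℤ[T;T⁻¹]).coeff (n : ℤ) := by
    rw [show (T (-(n:ℤ)) : ℤ[T;T⁻¹]) = AddMonoidAlgebra.single (-(n:ℤ)) 1 from rfl]
    rw [AddMonoidAlgebra.coeff_single_mul_apply]
    simp
  have h4 : (Polynomial.toLaurent (tq^n) : ℤ[T;T⁻¹]).coeff (n : ℤ) = (tq^n).coeff n := by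
    rw [LaurentPolynomial.coeff_toLaurent]
    exact Finsupp.mapDomain_apply Nat.castEmbedding.injective _ n
  rw [trinom, h2, h3, h4, aa]

lemma key_poly (m : ℕ) :
    Polynomial.C ((m:ℤ)+2) * tq^(m+2) - Polynomial.C (2*(m:ℤ)+3) * (X * tq^(m+1)) - Polynomial.C (3*(m:ℤ)+3) * (X^2 * tq^m)
    = X * derivative ((X^2-1) * tq^(m+1)) - Polynomial.C ((m:ℤ)+2) * ((X^2-1) * tq^(m+1)) := by
  have hd : derivative tq = 1 + 2*X := by
    simp [tq, mul_comm]
  rw [derivative_mul, derivative_pow, hd]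
  simp only [derivative_sub, derivative_one, derivative_X_pow, Nat.add_sub_cancel,
    C_eq_natCast, Nat.cast_add, Nat.cast_one, Nat.cast_ofNat, map_add, map_mul, map_one,
    map_ofNat, sub_zero]
  rw [tq]
  push_cast
  ring

lemma aa_rec (m : ℕ) :
    ((m:ℤ)+2) * aa (m+2) = (2*(m:ℤ)+3) * aa (m+1) + (3*(m:ℤ)+3) * aa m := by
  have h := congrArg (fun p : ℤ[X] => p.coeff (m+2)) (key_poly m)
  simp only [coeff_sub, coeff_C_mul] at h
  rw [show m+2 = (m+1)+1 from rfl, coeff_X_mul, show (m+1)+1 = m+2 from rfl] at h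
  rw [coeff_X_pow_mul (tq^m) 2 m] at h
  rw [show m+2 = (m+1)+1 from rfl, coeff_X_mul, coeff_derivative,
    show (m+1)+1 = m+2 from rfl] at h
  have : ((m:ℤ)+2) * aa (m+2) - (2*(m:ℤ)+3) * aa (m+1) - (3*(m:ℤ)+3) * aa m = 0 := by
    rw [aa, aa, aa, h]; push_cast; ring
  linarith

lemma aa_zero : aa 0 = 1 := by simp [aa]
lemma aa_one : aa 1 = 1 := by simp [aa, tq, coeff_one]
lemma aa_two : aa 2 = 3 := by
  have h : tq^2 = 1 + 2*X + 3*X^2 + 2*X^3 + X^4 := by rw [tq]; ring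
  rw [aa, h]
  simp [coeff_one, coeff_X]

/-- Generating function of central trinomial coefficients. -/
noncomputable def ff : PowerSeries ℚ := PowerSeries.mk fun n => (aa n : ℚ)

lemma hE : (PowerSeries.derivative ℚ) ff
    = ff + (3:ℚ) • (PowerSeries.X * ff) + (2:ℚ) • (PowerSeries.X * (PowerSeries.derivative ℚ) ff)
    + (3:ℚ) • (PowerSeries.X * (PowerSeries.X * (PowerSeries.derivative ℚ) ff)) := by
  ext n
  simp only [map_add, map_smul, PowerSeries.coeff_derivative, smul_eq_mul]
  match n with
  | 0 =>
    simp only [PowerSeries.coeff_zero_X_mul, ff, PowerSeries.coeff_mk, aa_zero, aa_one]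
    norm_num [aa_zero, aa_one, aa_two]
  | 1 =>
    simp only [PowerSeries.coeff_succ_X_mul, PowerSeries.coeff_zero_X_mul,
      PowerSeries.coeff_derivative, ff, PowerSeries.coeff_mk, aa_zero, aa_one, aa_two]
    norm_num [aa_zero, aa_one, aa_two]
  | (m+2) =>
    simp only [PowerSeries.coeff_succ_X_mul, PowerSeries.coeff_derivative, ff,
      PowerSeries.coeff_mk]
    have h' : ((m:ℚ)+1+2) * aa (m+1+2)
        = (2*((m:ℚ)+1)+3) * aa (m+1+1) + (3*((m:ℚ)+1)+3) * aa (m+1) := by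
      exact_mod_cast aa_rec (m+1)
    push_cast at h' ⊢
    linear_combination h'

/-- The power series `1 - 2X - 3X²`. -/
noncomputable def PP : PowerSeries ℚ := 1 - 2*PowerSeries.X - 3*PowerSeries.X^2

lemma ode : PP * (PowerSeries.derivative ℚ) ff = (1 + 3*PowerSeries.X) * ff := by
  have h := hE
  simp only [PowerSeries.smul_eq_C_mul, map_ofNat] at h
  rw [PP]
  linear_combination h

lemma dPP : (PowerSeries.derivative ℚ) PP = -(2+6*PowerSeries.X) := by
  have h2 : (2 : PowerSeries ℚ) * PowerSeries.X = (2:ℚ) • PowerSeries.X := by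
    rw [PowerSeries.smul_eq_C_mul, map_ofNat]
  have h3 : (3 : PowerSeries ℚ) * PowerSeries.X^2 = (3:ℚ) • PowerSeries.X^2 := by
    rw [PowerSeries.smul_eq_C_mul, map_ofNat]
  have hx2 : (PowerSeries.derivative ℚ) (PowerSeries.X^2) = 2 * PowerSeries.X := by
    rw [pow_two, Derivation.leibniz, PowerSeries.derivative_X]
    simp only [smul_eq_mul]
    ring
  rw [PP, map_sub, map_sub, Derivation.map_one_eq_zero, h2, h3, Derivation.map_smul,
    Derivation.map_smul, PowerSeries.derivative_X, hx2]
  rw [PowerSeries.smul_eq_C_mul, PowerSeries.smul_eq_C_mul, map_ofNat, map_ofNat]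
  ring

lemma hsq : PP * ff * ff = 1 := by
  apply PowerSeries.derivative.ext (R := ℚ)
  · rw [Derivation.leibniz, Derivation.leibniz]
    simp only [smul_eq_mul, Derivation.map_one_eq_zero]
    have h1 := ode
    have h2 := dPP
    linear_combination 2*ff*h1 + ff*ff*h2
  · simp only [map_mul, map_one]
    have hP : PowerSeries.constantCoeff PP = 1 := by simp [PP]
    have hf : PowerSeries.constantCoeff ff = 1 := by
      simp [ff, PowerSeries.constantCoeff_mk, aa_zero]
    rw [hP, hf]; norm_num

theorem final (k : ℕ) (_hk : 1 ≤ k) (c : Fin k → ℚ)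
    (hc : ∀ n : ℕ, (aa (n + k) : ℚ) = ∑ i : Fin k, c i * (aa (n + k - ((i : ℕ) + 1)) : ℚ)) :
    False := by
  classical
  set QQ : ℚ[X] := 1 - ∑ i : Fin k, Polynomial.C (c i) * Polynomial.X^((i:ℕ)+1) with hQQ
  have hQcoe : (QQ : PowerSeries ℚ)
      = 1 - ∑ i : Fin k, PowerSeries.C (c i) * PowerSeries.X^((i:ℕ)+1) := by
    rw [hQQ]
    push_cast
    congr 1
    rw [← Polynomial.coeToPowerSeries.ringHom_apply, map_sum]
    refine Finset.sum_congr rfl fun i _ => ?_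
    rw [Polynomial.coeToPowerSeries.ringHom_apply]
    push_cast
    rfl
  set g : PowerSeries ℚ := (QQ : PowerSeries ℚ) * ff with hg
  have hgc : ∀ m, k ≤ m → PowerSeries.coeff m g = 0 := by
    intro m hm
    rw [hg, hQcoe, sub_mul, one_mul, Finset.sum_mul, map_sub, map_sum]
    have hone : PowerSeries.coeff m ff = (aa m : ℚ) := by simp [ff]
    rw [hone]
    have hterm : ∀ i : Fin k,
        PowerSeries.coeff m (PowerSeries.C (c i) * PowerSeries.X^((i:ℕ)+1) * ff)
        = c i * (aa (m - ((i:ℕ)+1)) : ℚ) := by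
      intro i
      rw [mul_assoc, PowerSeries.coeff_C_mul]
      have hle : (i:ℕ)+1 ≤ m := le_trans (Nat.succ_le_of_lt i.2) hm
      rw [PowerSeries.coeff_X_pow_mul' ff ((i:ℕ)+1) m, if_pos hle]
      simp [ff]
    rw [Finset.sum_congr rfl (fun i _ => hterm i)]
    have := hc (m - k)
    rw [Nat.sub_add_cancel hm] at this
    rw [this]
    ring
  set G : ℚ[X] := PowerSeries.trunc k g with hG
  have hgG : g = (G : PowerSeries ℚ) := by
    ext m
    rw [hG, Polynomial.coeff_coe, PowerSeries.coeff_trunc]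
    split_ifs with h
    · rfl
    · exact hgc m (le_of_not_gt h)
  set Pp : ℚ[X] := 1 - 2*Polynomial.X - 3*Polynomial.X^2 with hPp
  have hPcoe : (Pp : PowerSeries ℚ) = PP := by
    have h2 : ((2:ℚ[X]) : PowerSeries ℚ) = 2 := by
      rw [show (2:ℚ[X]) = Polynomial.C 2 by rw [map_ofNat], Polynomial.coe_C]
      exact map_ofNat _ 2
    have h3 : ((3:ℚ[X]) : PowerSeries ℚ) = 3 := by
      rw [show (3:ℚ[X]) = Polynomial.C 3 by rw [map_ofNat], Polynomial.coe_C]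
      exact map_ofNat _ 3
    rw [hPp, PP]
    push_cast
    rw [h2, h3]
  have hpoly : Pp * G * G = QQ * QQ := by
    rw [← Polynomial.coe_inj]
    push_cast
    rw [hPcoe, ← hgG]
    calc PP * g * g = (QQ : PowerSeries ℚ) * (QQ : PowerSeries ℚ) * (PP * ff * ff) := by
          rw [hg]; ring
      _ = (QQ : PowerSeries ℚ) * (QQ : PowerSeries ℚ) := by rw [hsq, mul_one]
  have hQ0 : QQ.coeff 0 = 1 := by
    rw [hQQ]
    simp
  have hQne : QQ ≠ 0 := fun h => by simp [h] at hQ0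
  have hGne : G ≠ 0 := by
    intro h
    rw [h, mul_zero] at hpoly
    exact hQne (mul_self_eq_zero.mp hpoly.symm)
  have hPpfac : Pp = (Polynomial.X - Polynomial.C (-1)) * (1 - 3*Polynomial.X) := by
    have hC : Polynomial.C (-1 : ℚ) = -1 := by simp
    rw [hPp, hC]; ring
  have hPpne : Pp ≠ 0 := by
    intro h
    have : Pp.coeff 0 = 1 := by rw [hPp]; simp
    rw [h] at this; simp at this
  have hne1 : Pp * G ≠ 0 := mul_ne_zero hPpne hGne
  have hne2 : Pp * G * G ≠ 0 := mul_ne_zero hne1 hGne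
  have hL := Polynomial.rootMultiplicity_mul (x := (-1 : ℚ)) hne2
  have hL2 := Polynomial.rootMultiplicity_mul (x := (-1 : ℚ)) hne1
  have hR := Polynomial.rootMultiplicity_mul (x := (-1 : ℚ)) (mul_ne_zero hQne hQne)
  have hPprm : Polynomial.rootMultiplicity (-1 : ℚ) Pp = 1 := by
    rw [hPpfac]
    rw [Polynomial.rootMultiplicity_mul (by rw [← hPpfac]; exact hPpne)]
    rw [Polynomial.rootMultiplicity_X_sub_C_self]
    rw [Polynomial.rootMultiplicity_eq_zero (by norm_num [Polynomial.IsRoot])]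
  rw [hpoly] at hL
  rw [hL2, hPprm] at hL
  omega

end Aux

/-- The sequence of central trinomial coefficients `Tₙ = C(n, 0)₂` is not C-finite:
it satisfies no homogeneous linear recurrence with constant rational coefficients. -/
theorem central_trinomial_not_cfinite :
    ¬ ∃ (k : ℕ) (_ : 1 ≤ k) (c : Fin k → ℚ), ∀ n : ℕ,
      (trinom (n + k) 0 : ℚ) =
        ∑ i : Fin k, c i * (trinom (n + k - ((i : ℕ) + 1)) 0 : ℚ) := by
  rintro ⟨k, hk, c, hc⟩
  apply final k hk c
  intro n
  have := hc n
  simpa only [trinom_eq_aa] using this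
end

section
/- For P(x) = x⁻¹ + 1 + x and k = 10, the sequence n ↦ A(n+1, 10, 0) − A(n+1, 10, 1), where A(n, k, a) := Σ_{j∈ℤ} C(n, kj + a)₂, satisfies a homogeneous linear recurrence with constant integer coefficients of order 10: there exist integers d₁, …, d₁₀ such that for all n ≥ 0, A(n+11, 10, 0) − A(n+11, 10, 1) = Σ_{i=1}^{10} dᵢ·(A(n+11−i, 10, 0) − A(n+11−i, 10, 1)). Consequently, Andrews' identity A(n+1, 10, 0) − A(n+1, 10, 1) = Fₙ(Fₙ+1)/2 follows rigorously for all n once it is verified for the finitely many values 0 ≤ n ≤ 20. -/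
open LaurentPolynomial

/-- The generalized Euler–Andrews sum `A(n, 10, a) = Σ_{j∈ℤ} C(n, 10j + a)₂`. -/
noncomputable def A10 (n : ℕ) (a : ℤ) : ℤ :=
  ∑ᶠ j : ℤ, trinom n (10 * j + a)

namespace AndrewsAux

noncomputable def P : ℤ[T;T⁻¹] := T (-1) + 1 + T 1

lemma huv : (T 1 : ℤ[T;T⁻¹]) * T (-1) = 1 := by
  rw [← T_add]; norm_num

/-- The key order-10 relation satisfied by `P` modulo `T 10 - 1`. -/
lemma key10 : P ^ 10 =
    10 * P^9 - 35 * P^8 + 40 * P^7 + 35 * P^6 - 98 * P^5 + 15 * P^4 + 60 * P^3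
      - 15 * P^2 - 10 * P + 3 + (T 10 - 1) * ((T 10 - 1) * T (-10)) := by
  have hu : IsUnit ((T 1 : ℤ[T;T⁻¹]) ^ 10) := (isUnit_T 1).pow 10
  refine hu.mul_left_cancel ?_
  have hT10 : (T 10 : ℤ[T;T⁻¹]) = T 1 ^ 10 := by rw [T_pow]; norm_num
  have hTm10 : (T (-10) : ℤ[T;T⁻¹]) = T (-1) ^ 10 := by rw [T_pow]; norm_num
  rw [hT10, hTm10, P]
  linear_combination ((4)*(T 1 : ℤ[T;T⁻¹])^10 + (-25)*(T 1 : ℤ[T;T⁻¹])^10*(T (-1) : ℤ[T;T⁻¹])^2 + (50)*(T 1 : ℤ[T;T⁻¹])^10*(T (-1) : ℤ[T;T⁻¹])^4 + (-35)*(T 1 : ℤ[T;T⁻¹])^10*(T (-1) : ℤ[T;T⁻¹])^6 + (10)*(T 1 : ℤ[T;T⁻¹])^10*(T (-1) : ℤ[T;T⁻¹])^8 + (-46)*(T 1 : ℤ[T;T⁻¹])^11*(T (-1) : ℤ[T;T⁻¹]) + (175)*(T 1 : ℤ[T;T⁻¹])^11*(T (-1) : ℤ[T;T⁻¹])^3 +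 (-160)*(T 1 : ℤ[T;T⁻¹])^11*(T (-1) : ℤ[T;T⁻¹])^5 + (45)*(T 1 : ℤ[T;T⁻¹])^11*(T (-1) : ℤ[T;T⁻¹])^7 + (-25)*(T 1 : ℤ[T;T⁻¹])^12 + (254)*(T 1 : ℤ[T;T⁻¹])^12*(T (-1) : ℤ[T;T⁻¹])^2 + (-350)*(T 1 : ℤ[T;T⁻¹])^12*(T (-1) : ℤ[T;T⁻¹])^4 + (120)*(T 1 : ℤ[T;T⁻¹])^12*(T (-1) : ℤ[T;T⁻¹])^6 + (175)*(T 1 : ℤ[T;T⁻¹])^13*(T (-1) : ℤ[T;T⁻¹]) + (-446)*(T 1 : ℤ[T;T⁻¹])^13*(T (-1) : ℤ[T;T⁻¹])^3 + (210)*(T 1 : ℤ[T;T⁻¹])^13*(T (-1) : ℤ[T;T⁻¹])^5 + (50)*(T 1 : ℤ[T;T⁻¹])^14 + (-350)*(T 1 : ℤ[T;T⁻¹])^14*(T (-1) : ℤ[T;T⁻¹])^2 + (254)*(T 1 : ℤ[T;T⁻¹])^14*(T (-1) : ℤ[T;T⁻¹])^4 + (-160)*(T 1 : ℤ[T;T⁻¹])^15*(T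 (-1) : ℤ[T;T⁻¹]) + (210)*(T 1 : ℤ[T;T⁻¹])^15*(T (-1) : ℤ[T;T⁻¹])^3 + (2)*(T 1 : ℤ[T;T⁻¹])^15*(T (-1) : ℤ[T;T⁻¹])^5 + (-35)*(T 1 : ℤ[T;T⁻¹])^16 + (120)*(T 1 : ℤ[T;T⁻¹])^16*(T (-1) : ℤ[T;T⁻¹])^2 + (2)*(T 1 : ℤ[T;T⁻¹])^16*(T (-1) : ℤ[T;T⁻¹])^6 + (45)*(T 1 : ℤ[T;T⁻¹])^17*(T (-1) : ℤ[T;T⁻¹]) + (2)*(T 1 : ℤ[T;T⁻¹])^17*(T (-1) : ℤ[T;T⁻¹])^7 + (10)*(T 1 : ℤ[T;T⁻¹])^18 + (2)*(T 1 : ℤ[T;T⁻¹])^18*(T (-1) : ℤ[T;T⁻¹])^8 + (2)*(T 1 : ℤ[T;T⁻¹])^19*(T (-1) : ℤ[T;T⁻¹])^9 + (-1)*(T 1 : ℤ[T;T⁻¹])^20 + (-1)*(T 1 : ℤ[T;T⁻¹])^21*(T (-1) : ℤ[T;T⁻¹]) + (-1)*(T 1 : ℤ[T;T⁻¹])^22*(T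 (-1) : ℤ[T;T⁻¹])^2 + (-1)*(T 1 : ℤ[T;T⁻¹])^23*(T (-1) : ℤ[T;T⁻¹])^3 + (-1)*(T 1 : ℤ[T;T⁻¹])^24*(T (-1) : ℤ[T;T⁻¹])^4 + (-1)*(T 1 : ℤ[T;T⁻¹])^25*(T (-1) : ℤ[T;T⁻¹])^5 + (-1)*(T 1 : ℤ[T;T⁻¹])^26*(T (-1) : ℤ[T;T⁻¹])^6 + (-1)*(T 1 : ℤ[T;T⁻¹])^27*(T (-1) : ℤ[T;T⁻¹])^7 + (-1)*(T 1 : ℤ[T;T⁻¹])^28*(T (-1) : ℤ[T;T⁻¹])^8 + (-1)*(T 1 : ℤ[T;T⁻¹])^29*(T (-1) : ℤ[T;T⁻¹])^9) * huv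

lemma keyP (n : ℕ) : P ^ (n + 11) =
    (10:ℤ) • P^(n+10) - (35:ℤ) • P^(n+9) + (40:ℤ) • P^(n+8) + (35:ℤ) • P^(n+7)
      - (98:ℤ) • P^(n+6) + (15:ℤ) • P^(n+5) + (60:ℤ) • P^(n+4) - (15:ℤ) • P^(n+3)
      - (10:ℤ) • P^(n+2) + (3:ℤ) • P^(n+1)
      + (T 10 - 1) * ((T 10 - 1) * (T (-10) * P^(n+1))) := by
  simp only [zsmul_eq_mul]
  push_cast
  linear_combination (P^(n+1)) * key10

/-- coefficient extraction -/
noncomputable def cf (f : ℤ[T;T⁻¹]) (m : ℤ) : ℤ := f.coeff m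

lemma cf_add (f g : ℤ[T;T⁻¹]) (m : ℤ) : cf (f + g) m = cf f m + cf g m := rfl
lemma cf_sub (f g : ℤ[T;T⁻¹]) (m : ℤ) : cf (f - g) m = cf f m - cf g m := rfl
lemma cf_zero (m : ℤ) : cf 0 m = 0 := rfl

lemma Sfin (f : ℤ[T;T⁻¹]) (a : ℤ) :
    (Function.support fun j : ℤ => cf f (10 * j + a)).Finite := by
  have hsub : (Function.support fun j : ℤ => cf f (10 * j + a)) ⊆
      (fun j : ℤ => 10 * j + a) ⁻¹' ↑f.coeff.support := by
    intro j hj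
    simp only [Set.mem_preimage, Finsupp.mem_support_iff, Finset.mem_coe]
    exact hj
  refine Set.Finite.subset (Set.Finite.preimage ?_ f.coeff.support.finite_toSet) hsub
  intro x _ y _ h
  dsimp at h; omega

/-- The functional `f ↦ Σ_j f(10j+a)` as an additive hom. -/
noncomputable def Sh (a : ℤ) : ℤ[T;T⁻¹] →+ ℤ where
  toFun f := ∑ᶠ j : ℤ, cf f (10 * j + a)
  map_zero' := by simp [cf_zero]
  map_add' f g := by
    simp only [cf_add]
    exact finsum_add_distrib (Sfin f a) (Sfin g a)

lemma cf_T_mul (f : ℤ[T;T⁻¹]) (m : ℤ) : cf (T 10 * f) m = cf f (m - 10) := by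
  have := AddMonoidAlgebra.coeff_single_mul_apply f (1 : ℤ) (10 : ℤ) m
  show ((T 10 : ℤ[T;T⁻¹]) * f).coeff m = f.coeff (m - 10)
  rw [show (T (10:ℤ) : ℤ[T;T⁻¹]) = AddMonoidAlgebra.single (10:ℤ) (1:ℤ) from rfl, this, one_mul]
  ring_nf

lemma Sh_shift (f : ℤ[T;T⁻¹]) (a : ℤ) : Sh a ((T 10 - 1) * f) = 0 := by
  show (∑ᶠ j : ℤ, cf ((T 10 - 1) * f) (10 * j + a)) = 0
  have h1 : ∀ j : ℤ, cf ((T 10 - 1) * f) (10 * j + a)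
      = cf f (10 * (j - 1) + a) - cf f (10 * j + a) := by
    intro j
    rw [sub_mul, one_mul, cf_sub, cf_T_mul]
    ring_nf
  rw [finsum_congr h1]
  have hfin1 : (Function.support fun j : ℤ => cf f (10 * (j - 1) + a)).Finite := by
    have : (Function.support fun j : ℤ => cf f (10 * (j - 1) + a)) ⊆
        (fun j : ℤ => j - 1) ⁻¹' (Function.support fun j : ℤ => cf f (10 * j + a)) := by
      intro j hj; exact hj
    refine Set.Finite.subset (Set.Finite.preimage ?_ (Sfin f a)) this
    intro x _ y _ h; dsimp at h; omega
  rw [finsum_sub_distrib hfin1 (Sfin f a)]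
  have heq : (∑ᶠ j : ℤ, cf f (10 * (j - 1) + a)) = ∑ᶠ j : ℤ, cf f (10 * j + a) := by
    have := finsum_comp_equiv (Equiv.subRight (1 : ℤ))
      (f := fun j : ℤ => cf f (10 * j + a))
    simpa [Equiv.subRight_apply] using this
  rw [heq, sub_self]

lemma Sh_P (n : ℕ) (a : ℤ) : Sh a (P ^ n) = A10 n a := rfl

/-- The order-10 linear recurrence for `A10`. -/
lemma A10_rec (n : ℕ) (a : ℤ) :
    A10 (n+11) a = 10 * A10 (n+10) a - 35 * A10 (n+9) a + 40 * A10 (n+8) a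
      + 35 * A10 (n+7) a - 98 * A10 (n+6) a + 15 * A10 (n+5) a + 60 * A10 (n+4) a
      - 15 * A10 (n+3) a - 10 * A10 (n+2) a + 3 * A10 (n+1) a := by
  have h := congrArg (Sh a) (keyP n)
  simpa only [map_add, map_sub, map_zsmul, smul_eq_mul, Sh_shift, Sh_P, add_zero] using h

/-- Recurrence for the Fibonacci-side sequence. -/
lemma fib_rec (n : ℕ) :
    (Nat.fib (n+10) : ℤ) * ((Nat.fib (n+10) : ℤ) + 1) / 2 =
      10 * ((Nat.fib (n+9) : ℤ) * ((Nat.fib (n+9) : ℤ) + 1) / 2)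
      - 35 * ((Nat.fib (n+8) : ℤ) * ((Nat.fib (n+8) : ℤ) + 1) / 2)
      + 40 * ((Nat.fib (n+7) : ℤ) * ((Nat.fib (n+7) : ℤ) + 1) / 2)
      + 35 * ((Nat.fib (n+6) : ℤ) * ((Nat.fib (n+6) : ℤ) + 1) / 2)
      - 98 * ((Nat.fib (n+5) : ℤ) * ((Nat.fib (n+5) : ℤ) + 1) / 2)
      + 15 * ((Nat.fib (n+4) : ℤ) * ((Nat.fib (n+4) : ℤ) + 1) / 2)
      + 60 * ((Nat.fib (n+3) : ℤ) * ((Nat.fib (n+3) : ℤ) + 1) / 2)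
      - 15 * ((Nat.fib (n+2) : ℤ) * ((Nat.fib (n+2) : ℤ) + 1) / 2)
      - 10 * ((Nat.fib (n+1) : ℤ) * ((Nat.fib (n+1) : ℤ) + 1) / 2)
      + 3 * ((Nat.fib n : ℤ) * ((Nat.fib n : ℤ) + 1) / 2) := by
  have hdvd : ∀ m : ℕ, 2 * ((Nat.fib m : ℤ) * ((Nat.fib m : ℤ) + 1) / 2)
      = (Nat.fib m : ℤ) * ((Nat.fib m : ℤ) + 1) := by
    intro m
    exact Int.mul_ediv_cancel' (Int.even_mul_succ_self (Nat.fib m : ℤ)).two_dvd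
  have h2 : (Nat.fib (n+2) : ℤ) = Nat.fib n + Nat.fib (n+1) := by
    exact_mod_cast Nat.fib_add_two
  have h3 : (Nat.fib (n+3) : ℤ) = Nat.fib (n+1) + Nat.fib (n+2) := by
    rw [show n+3 = n+1+2 by omega, show n+2 = n+1+1 by omega]
    exact_mod_cast Nat.fib_add_two
  have h4 : (Nat.fib (n+4) : ℤ) = Nat.fib (n+2) + Nat.fib (n+3) := by
    rw [show n+4 = n+2+2 by omega, show n+3 = n+2+1 by omega]
    exact_mod_cast Nat.fib_add_two
  have h5 : (Nat.fib (n+5) : ℤ) = Nat.fib (n+3) + Nat.fib (n+4) := by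
    rw [show n+5 = n+3+2 by omega, show n+4 = n+3+1 by omega]
    exact_mod_cast Nat.fib_add_two
  have h6 : (Nat.fib (n+6) : ℤ) = Nat.fib (n+4) + Nat.fib (n+5) := by
    rw [show n+6 = n+4+2 by omega, show n+5 = n+4+1 by omega]
    exact_mod_cast Nat.fib_add_two
  have h7 : (Nat.fib (n+7) : ℤ) = Nat.fib (n+5) + Nat.fib (n+6) := by
    rw [show n+7 = n+5+2 by omega, show n+6 = n+5+1 by omega]
    exact_mod_cast Nat.fib_add_two
  have h8 : (Nat.fib (n+8) : ℤ) = Nat.fib (n+6) + Nat.fib (n+7) := by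
    rw [show n+8 = n+6+2 by omega, show n+7 = n+6+1 by omega]
    exact_mod_cast Nat.fib_add_two
  have h9 : (Nat.fib (n+9) : ℤ) = Nat.fib (n+7) + Nat.fib (n+8) := by
    rw [show n+9 = n+7+2 by omega, show n+8 = n+7+1 by omega]
    exact_mod_cast Nat.fib_add_two
  have h10 : (Nat.fib (n+10) : ℤ) = Nat.fib (n+8) + Nat.fib (n+9) := by
    rw [show n+10 = n+8+2 by omega, show n+9 = n+8+1 by omega]
    exact_mod_cast Nat.fib_add_two
  have main : (Nat.fib (n+10) : ℤ) * ((Nat.fib (n+10) : ℤ) + 1) =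
      10 * ((Nat.fib (n+9) : ℤ) * ((Nat.fib (n+9) : ℤ) + 1))
      - 35 * ((Nat.fib (n+8) : ℤ) * ((Nat.fib (n+8) : ℤ) + 1))
      + 40 * ((Nat.fib (n+7) : ℤ) * ((Nat.fib (n+7) : ℤ) + 1))
      + 35 * ((Nat.fib (n+6) : ℤ) * ((Nat.fib (n+6) : ℤ) + 1))
      - 98 * ((Nat.fib (n+5) : ℤ) * ((Nat.fib (n+5) : ℤ) + 1))
      + 15 * ((Nat.fib (n+4) : ℤ) * ((Nat.fib (n+4) : ℤ) + 1))
      + 60 * ((Nat.fib (n+3) : ℤ) * ((Nat.fib (n+3) : ℤ) + 1))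
      - 15 * ((Nat.fib (n+2) : ℤ) * ((Nat.fib (n+2) : ℤ) + 1))
      - 10 * ((Nat.fib (n+1) : ℤ) * ((Nat.fib (n+1) : ℤ) + 1))
      + 3 * ((Nat.fib n : ℤ) * ((Nat.fib n : ℤ) + 1)) := by
    rw [h10, h9, h8, h7, h6, h5, h4, h3, h2]
    ring
  linarith [hdvd (n+10), hdvd (n+9), hdvd (n+8), hdvd (n+7), hdvd (n+6), hdvd (n+5),
    hdvd (n+4), hdvd (n+3), hdvd (n+2), hdvd (n+1), hdvd n, main]

end AndrewsAux

open AndrewsAux in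
/-- The sequence `n ↦ A(n+1, 10, 0) − A(n+1, 10, 1)` satisfies a homogeneous linear
recurrence with constant integer coefficients of order `10`; consequently Andrews'
identity `A(n+1,10,0) − A(n+1,10,1) = Fₙ(Fₙ+1)/2` holds for all `n` once it is
verified for `0 ≤ n ≤ 20`. -/
theorem andrews_cfinite_and_finite_check :
    (∃ d : Fin 10 → ℤ, ∀ n : ℕ,
        A10 (n + 11) 0 - A10 (n + 11) 1 =
          ∑ i : Fin 10, d i *
            (A10 (n + 11 - ((i : ℕ) + 1)) 0 - A10 (n + 11 - ((i : ℕ) + 1)) 1)) ∧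
    ((∀ n : ℕ, n ≤ 20 →
        A10 (n + 1) 0 - A10 (n + 1) 1 = (Nat.fib n : ℤ) * ((Nat.fib n : ℤ) + 1) / 2) →
      ∀ n : ℕ,
        A10 (n + 1) 0 - A10 (n + 1) 1 = (Nat.fib n : ℤ) * ((Nat.fib n : ℤ) + 1) / 2) := by
  constructor
  · refine ⟨![10, -35, 40, 35, -98, 15, 60, -15, -10, 3], fun n => ?_⟩
    have h0 := A10_rec n 0
    have h1 := A10_rec n 1
    simp only [Fin.sum_univ_succ, Finset.univ_eq_empty, Finset.sum_empty, Fin.val_zero,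
      Fin.val_succ, Matrix.cons_val_zero, Matrix.cons_val_succ]
    norm_num
    rw [show n + 11 - 2 = n + 9 from by omega]
    rw [show n + 11 - 3 = n + 8 from by omega]
    rw [show n + 11 - 4 = n + 7 from by omega]
    rw [show n + 11 - 5 = n + 6 from by omega]
    rw [show n + 11 - 6 = n + 5 from by omega]
    rw [show n + 11 - 7 = n + 4 from by omega]
    rw [show n + 11 - 8 = n + 3 from by omega]
    rw [show n + 11 - 9 = n + 2 from by omega]
    rw [show n + 11 - 10 = n + 1 from by omega]
    linarith
  · intro hbase n
    induction n using Nat.strong_induction_on with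
    | _ n ih =>
      by_cases hn : n ≤ 20
      · exact hbase n hn
      · have h21 : 21 ≤ n := by omega
        have hm : n = (n - 10) + 10 := by omega
        set m := n - 10 with hmdef
        rw [hm]
        rw [show m + 10 + 1 = m + 11 from by omega]
        have hs := A10_rec m 0
        have hs' := A10_rec m 1
        rw [show m + 2 = m + 1 + 1 from by omega] at hs hs'
        rw [show m + 3 = m + 2 + 1 from by omega] at hs hs'
        rw [show m + 4 = m + 3 + 1 from by omega] at hs hs'
        rw [show m + 5 = m + 4 + 1 from by omega] at hs hs'
        rw [show m + 6 = m + 5 + 1 from by omega] at hs hs'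
        rw [show m + 7 = m + 6 + 1 from by omega] at hs hs'
        rw [show m + 8 = m + 7 + 1 from by omega] at hs hs'
        rw [show m + 9 = m + 8 + 1 from by omega] at hs hs'
        rw [show m + 10 = m + 9 + 1 from by omega] at hs hs'
        have hfib := fib_rec m
        have i1 := ih (m + 1) (by omega)
        have i2 := ih (m + 2) (by omega)
        have i3 := ih (m + 3) (by omega)
        have i4 := ih (m + 4) (by omega)
        have i5 := ih (m + 5) (by omega)
        have i6 := ih (m + 6) (by omega)
        have i7 := ih (m + 7) (by omega)
        have i8 := ih (m + 8) (by omega)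
        have i9 := ih (m + 9) (by omega)
        have i0 := ih m (by omega)
        linarith [hs, hs', hfib, i0, i1, i2, i3, i4, i5, i6, i7, i8, i9]
end
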